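/- arXiv:2006.13591 — 6 statements merged into one kernel-verified Lean document; each statement's English description precedes it below -/
import Mathlib

section
/- Let $H \in \mathbb{R}^{n\times n}$ be a symmetric positive definite matrix and let $\mathcal{P} = \{\mathcal{P}_1,\dots,\mathcal{P}_K\}$ be a partition of $\{1,\dots,n\}$ into $K$ disjoint nonempty sets. Define the block-diagonal matrix $H_\mathcal{P} := \sum_{k=1}^K H_{[\mathcal{P}_k,\mathcal{P}_k]}$, where $H_{[\mathcal{P}_k,\mathcal{P}_k]}$ is the matrix equal to $H$ on entries $(i,j)$ with $i,j \in \mathcal{P}_k$ and zero elsewhere. Then for every $x \in \mathbb{R}^n$ it holds that $x^\top H x \leq K\, x^\top H_\mathcal{P} x$. -/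
open Matrix

/-- Block-diagonal restriction of a matrix induced by a block assignment `π`. -/
def maskMat {n K : ℕ} (M : Matrix (Fin n) (Fin n) ℝ) (π : Fin n → Fin K) :
    Matrix (Fin n) (Fin n) ℝ :=
  Matrix.of fun i j => if π i = π j then M i j else 0

theorem stmt0 {n K : ℕ} (H : Matrix (Fin n) (Fin n) ℝ) (hH : H.PosDef)
    (π : Fin n → Fin K) (hπ : Function.Surjective π) (x : Fin n → ℝ) :
    x ⬝ᵥ (H *ᵥ x) ≤ (K : ℝ) * (x ⬝ᵥ (maskMat H π *ᵥ x)) := by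
  classical
  set v : Fin K → Fin n → ℝ := fun k i => if π i = k then x i else 0 with hv
  have hx : x = ∑ k, v k := by
    funext i
    simp [hv]
  -- symmetry of the bilinear form
  have hsym : ∀ a b : Fin n → ℝ, a ⬝ᵥ (H *ᵥ b) = b ⬝ᵥ (H *ᵥ a) := by
    intro a b
    rw [Matrix.dotProduct_mulVec, ← Matrix.mulVec_transpose]
    have hT : Hᵀ = H := hH.1
    rw [hT, dotProduct_comm]
  have hnn : ∀ a : Fin n → ℝ, 0 ≤ a ⬝ᵥ (H *ᵥ a) := by
    intro a
    have := hH.posSemidef.dotProduct_mulVec_nonneg a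
    simpa using this
  -- Cauchy-Schwarz type bound
  have hCS : ∀ a b : Fin n → ℝ,
      a ⬝ᵥ (H *ᵥ b) ≤ (a ⬝ᵥ (H *ᵥ a) + b ⬝ᵥ (H *ᵥ b)) / 2 := by
    intro a b
    have h0 := hnn (a - b)
    have hexp : (a - b) ⬝ᵥ (H *ᵥ (a - b))
        = a ⬝ᵥ (H *ᵥ a) - 2 * (a ⬝ᵥ (H *ᵥ b)) + b ⬝ᵥ (H *ᵥ b) := by
      rw [Matrix.mulVec_sub, sub_dotProduct, dotProduct_sub,
        dotProduct_sub, hsym b a]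
      ring
    nlinarith [h0, hexp]
  -- expand LHS
  have hmul : H *ᵥ x = ∑ k, H *ᵥ v k := by
    rw [hx]
    exact map_sum H.mulVecLin v Finset.univ
  have sumdot : ∀ (f : Fin K → Fin n → ℝ) (w : Fin n → ℝ),
      (∑ k, f k) ⬝ᵥ w = ∑ k, f k ⬝ᵥ w := by
    intro f w
    simp only [dotProduct, Finset.sum_apply, Finset.sum_mul]
    exact Finset.sum_comm
  have dotsum : ∀ (w : Fin n → ℝ) (f : Fin K → Fin n → ℝ),
      w ⬝ᵥ (∑ k, f k) = ∑ k, w ⬝ᵥ f k := by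
    intro w f
    simp only [dotProduct, Finset.sum_apply, Finset.mul_sum]
    exact Finset.sum_comm
  have hL : x ⬝ᵥ (H *ᵥ x) = ∑ k, ∑ l, v k ⬝ᵥ (H *ᵥ v l) := by
    rw [hmul]
    nth_rewrite 1 [hx]
    rw [sumdot]
    exact Finset.sum_congr rfl fun k _ => dotsum (v k) fun l => H *ᵥ v l
  -- RHS equals sum of block quadratic forms
  have hR : x ⬝ᵥ (maskMat H π *ᵥ x) = ∑ k, v k ⬝ᵥ (H *ᵥ v k) := by
    have lhs : x ⬝ᵥ (maskMat H π *ᵥ x)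
        = ∑ i, ∑ j, (if π i = π j then x i * H i j * x j else 0) := by
      simp [dotProduct, Matrix.mulVec, maskMat, Finset.mul_sum,
        mul_ite, ite_mul, mul_assoc]
    have rhs : ∀ k, v k ⬝ᵥ (H *ᵥ v k)
        = ∑ i, ∑ j, (if π i = k ∧ π j = k then x i * H i j * x j else 0) := by
      intro k
      rw [show v k ⬝ᵥ (H *ᵥ v k) = ∑ i, ∑ j, v k i * (H i j * v k j) from by
        simp [dotProduct, Matrix.mulVec, Finset.mul_sum]]
      refine Finset.sum_congr rfl fun i _ => Finset.sum_congr rfl fun j _ => ?_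
      by_cases h1 : π i = k <;> by_cases h2 : π j = k <;>
        simp [hv, h1, h2, mul_assoc]
    rw [lhs]
    rw [show (∑ k, v k ⬝ᵥ (H *ᵥ v k))
        = ∑ k, ∑ i, ∑ j, (if π i = k ∧ π j = k then x i * H i j * x j else 0)
      from Finset.sum_congr rfl fun k _ => rhs k]
    conv_rhs => rw [Finset.sum_comm]
    refine Finset.sum_congr rfl fun i _ => ?_
    conv_rhs => rw [Finset.sum_comm]
    refine Finset.sum_congr rfl fun j _ => ?_
    symm
    by_cases h : π i = π j
    · rw [if_pos h]
      rw [Finset.sum_eq_single (π i)]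
      · simp [h]
      · intro b _ hb
        rw [if_neg]
        rintro ⟨h1, _⟩
        exact hb h1.symm
      · simp
    · rw [if_neg h]
      apply Finset.sum_eq_zero
      intro k _
      rw [if_neg]
      rintro ⟨h1, h2⟩
      exact h (h1.trans h2.symm)
  rw [hL, hR]
  calc ∑ k, ∑ l, v k ⬝ᵥ (H *ᵥ v l)
      ≤ ∑ k, ∑ l, (v k ⬝ᵥ (H *ᵥ v k) + v l ⬝ᵥ (H *ᵥ v l)) / 2 := by
        apply Finset.sum_le_sum; intro k _
        apply Finset.sum_le_sum; intro l _
        exact hCS (v k) (v l)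
    _ = (K : ℝ) * ∑ k, v k ⬝ᵥ (H *ᵥ v k) := by
        have : ∀ k : Fin K, ∑ l, (v k ⬝ᵥ (H *ᵥ v k) + v l ⬝ᵥ (H *ᵥ v l)) / 2
            = (K : ℝ) * (v k ⬝ᵥ (H *ᵥ v k)) / 2 + (∑ l, v l ⬝ᵥ (H *ᵥ v l)) / 2 := by
          intro k
          rw [← Finset.sum_div, Finset.sum_add_distrib, Finset.sum_const,
            Finset.card_univ, Fintype.card_fin, nsmul_eq_mul, add_div]
        rw [Finset.sum_congr rfl fun k _ => this k, Finset.sum_add_distrib,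
          Finset.sum_const, Finset.card_univ, Fintype.card_fin, nsmul_eq_mul,
          ← Finset.sum_div, ← Finset.mul_sum]
        ring
end

section
/- Let $f(x) = \tfrac12 x^\top H x - c^\top x$ with $H$ symmetric positive definite, $x^\star = H^{-1}c$. Let $\mathcal{P}$ be a random partition of $[n]$ into $K$ blocks, $H_\mathcal{P}$ its induced block-diagonal restriction of $H$ (assumed invertible almost surely), and consider one step $x_{+} = x - \tfrac1K H_\mathcal{P}^{-1}\nabla f(x)$. If $\rho := \tfrac1K \lambda_{\min}\big(\mathbb{E}[H_\mathcal{P}^{-1}] H\big)$, then $\mathbb{E}[f(x_+)] - f(x^\star) \leq (1-\rho)\big(f(x) - f(x^\star)\big)$, and consequently after $t$ steps $\mathbb{E}[f(x_t)] - f(x^\star) \leq (1-\rho)^t (f(x_0) - f(x^\star))$. -/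
open Matrix

/-- The smallest (real) eigenvalue of a matrix. -/
noncomputable def lambdaMin {n : ℕ} (M : Matrix (Fin n) (Fin n) ℝ) : ℝ :=
  sInf {μ : ℝ | Module.End.HasEigenvalue (Matrix.toLin' M) μ}

/-- One step of block-diagonally preconditioned gradient descent for the quadratic
`f(x) = ½ xᵀHx - cᵀx`, with step size `1/K` and partition `π`. -/
noncomputable def quadStep {n K : ℕ} (H : Matrix (Fin n) (Fin n) ℝ) (c : Fin n → ℝ)
    (π : Fin n → Fin K) (x : Fin n → ℝ) : Fin n → ℝ :=
  x - ((K : ℝ)⁻¹) • ((maskMat H π)⁻¹ *ᵥ (H *ᵥ x - c))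

namespace Stmt3Aux

variable {n K : ℕ}

/-- Projection of a vector onto block `k`. -/
def proj (π : Fin n → Fin K) (k : Fin K) (x : Fin n → ℝ) : Fin n → ℝ :=
  fun i => if π i = k then x i else 0

lemma sum_proj (π : Fin n → Fin K) (x : Fin n → ℝ) : ∑ k, proj π k x = x := by
  funext i
  simp [proj, Finset.sum_apply, Finset.sum_ite_eq]

lemma star_eq (x : Fin n → ℝ) : star x = x := funext fun i => star_trivial _

lemma dot_mulVec_comm {A : Matrix (Fin n) (Fin n) ℝ} (hA : A.IsHermitian)
    (x y : Fin n → ℝ) : x ⬝ᵥ (A *ᵥ y) = y ⬝ᵥ (A *ᵥ x) := by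
  have hAt : Aᵀ = A := by
    rw [← Matrix.conjTranspose_eq_transpose_of_trivial, hA.eq]
  rw [Matrix.dotProduct_mulVec, ← Matrix.mulVec_transpose, hAt, dotProduct_comm]

lemma mulVec_sum' {ι : Type*} (s : Finset ι) (A : Matrix (Fin n) (Fin n) ℝ)
    (v : ι → Fin n → ℝ) : A *ᵥ (∑ i ∈ s, v i) = ∑ i ∈ s, A *ᵥ v i := by
  funext j
  simp only [Matrix.mulVec, dotProduct, Finset.sum_apply, Finset.mul_sum]
  rw [Finset.sum_comm]

lemma sum_mulVec' {ι : Type*} (s : Finset ι) (A : ι → Matrix (Fin n) (Fin n) ℝ)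
    (g : Fin n → ℝ) : (∑ i ∈ s, A i) *ᵥ g = ∑ i ∈ s, A i *ᵥ g := by
  funext j
  simp only [Matrix.mulVec, dotProduct, Finset.sum_apply, Matrix.sum_apply,
    Finset.sum_mul]
  rw [Finset.sum_comm]

lemma dotProduct_sum' {ι : Type*} (s : Finset ι) (x : Fin n → ℝ)
    (v : ι → Fin n → ℝ) : x ⬝ᵥ (∑ i ∈ s, v i) = ∑ i ∈ s, x ⬝ᵥ v i := by
  simp only [dotProduct, Finset.sum_apply, Finset.mul_sum]
  rw [Finset.sum_comm]

lemma sum_dotProduct' {ι : Type*} (s : Finset ι) (x : Fin n → ℝ)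
    (v : ι → Fin n → ℝ) : (∑ i ∈ s, v i) ⬝ᵥ x = ∑ i ∈ s, v i ⬝ᵥ x := by
  simp only [dotProduct, Finset.sum_apply, Finset.sum_mul]
  rw [Finset.sum_comm]

lemma dot_mask (H : Matrix (Fin n) (Fin n) ℝ) (π : Fin n → Fin K) (x : Fin n → ℝ) :
    x ⬝ᵥ (maskMat H π *ᵥ x) = ∑ k, proj π k x ⬝ᵥ (H *ᵥ proj π k x) := by
  simp only [dotProduct, Matrix.mulVec, maskMat, proj, Matrix.of_apply]
  rw [Finset.sum_comm]
  refine Finset.sum_congr rfl fun i _ => ?_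
  simp only [Finset.mul_sum, dotProduct]
  rw [Finset.sum_comm]
  refine Finset.sum_congr rfl fun j _ => ?_
  simp only [ite_mul, mul_ite, zero_mul, mul_zero]
  rw [Finset.sum_ite_eq Finset.univ (π j)]
  simp only [Finset.mem_univ, if_true]

lemma mask_isHermitian {H : Matrix (Fin n) (Fin n) ℝ} (hH : H.IsHermitian)
    (π : Fin n → Fin K) : (maskMat H π).IsHermitian := by
  have hs : ∀ i j, H j i = H i j := fun i j => by
    conv_lhs => rw [← hH.eq]
    simp [Matrix.conjTranspose_apply]
  ext i j
  rw [Matrix.conjTranspose_apply, star_trivial]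
  show (if π j = π i then H j i else 0) = if π i = π j then H i j else 0
  by_cases h : π i = π j
  · rw [if_pos h.symm, if_pos h, hs i j]
  · rw [if_neg (fun hh => h hh.symm), if_neg h]

lemma mask_posDef {H : Matrix (Fin n) (Fin n) ℝ} (hH : H.PosDef)
    (π : Fin n → Fin K) : (maskMat H π).PosDef := by
  refine Matrix.PosDef.of_dotProduct_mulVec_pos (mask_isHermitian hH.1 π) fun x hx => ?_
  rw [star_eq, dot_mask]
  obtain ⟨i, hi⟩ := Function.ne_iff.mp hx
  refine Finset.sum_pos' (fun k _ => ?_) ⟨π i, Finset.mem_univ _, ?_⟩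
  · have := hH.posSemidef.dotProduct_mulVec_nonneg (proj π k x)
    rwa [star_eq] at this
  · have hp : proj π (π i) x ≠ 0 := by
      intro h
      exact hi (by simpa [proj] using congrFun h i)
    have := hH.dotProduct_mulVec_pos hp
    rwa [star_eq] at this

lemma quad_nonneg {H : Matrix (Fin n) (Fin n) ℝ} (hH : H.PosSemidef) (x : Fin n → ℝ) :
    0 ≤ x ⬝ᵥ (H *ᵥ x) := by
  have := hH.dotProduct_mulVec_nonneg x; rwa [star_eq] at this

lemma quad_pos {H : Matrix (Fin n) (Fin n) ℝ} (hH : H.PosDef) {x : Fin n → ℝ} (hx : x ≠ 0) :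
    0 < x ⬝ᵥ (H *ᵥ x) := by
  have := hH.dotProduct_mulVec_pos hx; rwa [star_eq] at this

lemma two_mul_dot_le {H : Matrix (Fin n) (Fin n) ℝ} (hH : H.PosSemidef) (u v : Fin n → ℝ) :
    2 * (u ⬝ᵥ (H *ᵥ v)) ≤ u ⬝ᵥ (H *ᵥ u) + v ⬝ᵥ (H *ᵥ v) := by
  have h0 := quad_nonneg hH (u - v)
  rw [Matrix.mulVec_sub, dotProduct_sub, sub_dotProduct,
    sub_dotProduct] at h0
  have hc := dot_mulVec_comm hH.1 u v
  nlinarith [h0]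

lemma quad_le_K_mask {H : Matrix (Fin n) (Fin n) ℝ} (hH : H.PosSemidef)
    (π : Fin n → Fin K) (x : Fin n → ℝ) :
    x ⬝ᵥ (H *ᵥ x) ≤ (K : ℝ) * (x ⬝ᵥ (maskMat H π *ᵥ x)) := by
  rw [dot_mask]
  set q : Fin K → ℝ := fun k => proj π k x ⬝ᵥ (H *ᵥ proj π k x) with hq
  have hx : x ⬝ᵥ (H *ᵥ x) = ∑ k, ∑ l, proj π k x ⬝ᵥ (H *ᵥ proj π l x) := by
    conv_lhs => rw [← sum_proj π x]
    rw [mulVec_sum', sum_dotProduct']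
    exact Finset.sum_congr rfl fun k _ => dotProduct_sum' _ _ _
  rw [hx]
  have hstep : ∀ k, ∑ l, (q k + q l) / 2 = ((K : ℝ) * q k + ∑ l, q l) / 2 := by
    intro k
    rw [← Finset.sum_div, Finset.sum_add_distrib, Finset.sum_const, Finset.card_univ,
      Fintype.card_fin, nsmul_eq_mul]
  calc ∑ k, ∑ l, proj π k x ⬝ᵥ (H *ᵥ proj π l x)
      ≤ ∑ k, ∑ l, (q k + q l) / 2 := by
        refine Finset.sum_le_sum fun k _ => Finset.sum_le_sum fun l _ => ?_
        have := two_mul_dot_le hH (proj π k x) (proj π l x)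
        simp only [hq]
        linarith
    _ = (K : ℝ) * ∑ k, q k := by
        simp only [hstep]
        rw [← Finset.sum_div, Finset.sum_add_distrib, ← Finset.mul_sum, Finset.sum_const,
          Finset.card_univ, Fintype.card_fin, nsmul_eq_mul]
        ring

/-- Inverse monotonicity for the quadratic forms. -/
lemma inv_quad_le {A B : Matrix (Fin n) (Fin n) ℝ} (hA : A.PosDef) (hB : B.PosDef)
    (h : ∀ x, x ⬝ᵥ (B *ᵥ x) ≤ x ⬝ᵥ (A *ᵥ x)) (u : Fin n → ℝ) :
    u ⬝ᵥ (A⁻¹ *ᵥ u) ≤ u ⬝ᵥ (B⁻¹ *ᵥ u) := by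
  have hAdet : IsUnit A.det := hA.det_pos.ne'.isUnit
  have hBdet : IsUnit B.det := hB.det_pos.ne'.isUnit
  set v := A⁻¹ *ᵥ u with hv
  have hAv : A *ᵥ v = u := by
    rw [hv, Matrix.mulVec_mulVec, Matrix.mul_nonsing_inv _ hAdet, Matrix.one_mulVec]
  have hBinv : B *ᵥ (B⁻¹ *ᵥ u) = u := by
    rw [Matrix.mulVec_mulVec, Matrix.mul_nonsing_inv _ hBdet, Matrix.one_mulVec]
  -- key : 2 u⬝ᵥv - v⬝ᵥBv ≤ u⬝ᵥB⁻¹u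
  have key : 2 * (u ⬝ᵥ v) - v ⬝ᵥ (B *ᵥ v) ≤ u ⬝ᵥ (B⁻¹ *ᵥ u) := by
    have h2 := two_mul_dot_le hB.posSemidef v (B⁻¹ *ᵥ u)
    rw [hBinv] at h2
    have e1 : v ⬝ᵥ u = u ⬝ᵥ v := dotProduct_comm _ _
    have e2 : (B⁻¹ *ᵥ u) ⬝ᵥ u = u ⬝ᵥ (B⁻¹ *ᵥ u) := dotProduct_comm _ _
    rw [e1, e2] at h2
    linarith
  have hvAv : v ⬝ᵥ (A *ᵥ v) = u ⬝ᵥ v := by rw [hAv, dotProduct_comm]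
  have := h v
  calc u ⬝ᵥ (A⁻¹ *ᵥ u) = 2 * (u ⬝ᵥ v) - v ⬝ᵥ (A *ᵥ v) := by rw [hvAv]; ring
    _ ≤ 2 * (u ⬝ᵥ v) - v ⬝ᵥ (B *ᵥ v) := by linarith
    _ ≤ u ⬝ᵥ (B⁻¹ *ᵥ u) := key

lemma hasEigenvalue_iff_exists (M : Matrix (Fin n) (Fin n) ℝ) (μ : ℝ) :
    Module.End.HasEigenvalue (Matrix.toLin' M) μ ↔
      ∃ v : Fin n → ℝ, v ≠ 0 ∧ M *ᵥ v = μ • v := by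
  rw [Module.End.hasEigenvalue_iff, Submodule.ne_bot_iff]
  constructor
  · rintro ⟨v, hv, hv0⟩
    exact ⟨v, hv0, by simpa [Matrix.toLin'_apply] using Module.End.mem_eigenspace_iff.1 hv⟩
  · rintro ⟨v, hv0, hv⟩
    exact ⟨v, Module.End.mem_eigenspace_iff.2 (by simpa [Matrix.toLin'_apply] using hv), hv0⟩

lemma eigSet_hermitian {S : Matrix (Fin n) (Fin n) ℝ} (hS : S.IsHermitian) :
    {μ : ℝ | Module.End.HasEigenvalue (Matrix.toLin' S) μ} = Set.range hS.eigenvalues := by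
  have hU1 : star (hS.eigenvectorUnitary : Matrix (Fin n) (Fin n) ℝ) *
      (hS.eigenvectorUnitary : Matrix (Fin n) (Fin n) ℝ) = 1 :=
    Unitary.coe_star_mul_self _
  have hU2 : (hS.eigenvectorUnitary : Matrix (Fin n) (Fin n) ℝ) *
      star (hS.eigenvectorUnitary : Matrix (Fin n) (Fin n) ℝ) = 1 :=
    Unitary.coe_mul_star_self _
  have hST : S = (hS.eigenvectorUnitary : Matrix (Fin n) (Fin n) ℝ) *
      Matrix.diagonal hS.eigenvalues * star (hS.eigenvectorUnitary : Matrix (Fin n) (Fin n) ℝ) := by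
    have := hS.spectral_theorem
    simpa using this
  ext μ
  simp only [Set.mem_setOf_eq, hasEigenvalue_iff_exists, Set.mem_range]
  constructor
  · rintro ⟨v, hv0, hv⟩
    set U : Matrix (Fin n) (Fin n) ℝ := (hS.eigenvectorUnitary : Matrix (Fin n) (Fin n) ℝ)
    set wv : Fin n → ℝ := star U *ᵥ v with hwv
    have hDw : Matrix.diagonal hS.eigenvalues *ᵥ wv = μ • wv := by
      have := congrArg (fun z => star U *ᵥ z) hv
      simp only [Matrix.mulVec_smul] at this
      rw [hST] at this
      rw [hwv]
      calc Matrix.diagonal hS.eigenvalues *ᵥ (star U *ᵥ v)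
          = (Matrix.diagonal hS.eigenvalues * star U) *ᵥ v := Matrix.mulVec_mulVec _ _ _
        _ = ((star U * U) * Matrix.diagonal hS.eigenvalues * star U) *ᵥ v := by rw [hU1]; simp
        _ = (star U * (U * Matrix.diagonal hS.eigenvalues * star U)) *ᵥ v := by
            rw [← Matrix.mul_assoc, ← Matrix.mul_assoc]
        _ = star U *ᵥ ((U * Matrix.diagonal hS.eigenvalues * star U) *ᵥ v) :=
            (Matrix.mulVec_mulVec _ _ _).symm
        _ = μ • (star U *ᵥ v) := this
    have hw0 : wv ≠ 0 := by
      intro h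
      apply hv0
      have : U *ᵥ wv = v := by
        rw [hwv, Matrix.mulVec_mulVec, hU2, Matrix.one_mulVec]
      rw [h, Matrix.mulVec_zero] at this
      exact this.symm
    obtain ⟨i, hi⟩ := Function.ne_iff.mp hw0
    refine ⟨i, ?_⟩
    have := congrFun hDw i
    simp only [Matrix.mulVec_diagonal, Pi.smul_apply, smul_eq_mul] at this
    exact mul_right_cancel₀ hi this
  · rintro ⟨i, rfl⟩
    refine ⟨⇑(hS.eigenvectorBasis i), ?_, hS.mulVec_eigenvectorBasis i⟩
    intro h
    exact hS.eigenvectorBasis.orthonormal.ne_zero i (by ext j; exact congrFun h j)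

lemma lambdaMin_facts {S : Matrix (Fin n) (Fin n) ℝ} (hS : S.IsHermitian) :
    (∀ v : Fin n → ℝ, lambdaMin S * (v ⬝ᵥ v) ≤ v ⬝ᵥ (S *ᵥ v)) ∧
    (n ≠ 0 → ∃ v : Fin n → ℝ, v ≠ 0 ∧ S *ᵥ v = lambdaMin S • v) := by
  rcases eq_or_ne n 0 with h0 | h0
  · subst h0
    refine ⟨fun v => ?_, by simp⟩
    simp [dotProduct]
  · have hnon : Nonempty (Fin n) := ⟨⟨0, Nat.pos_of_ne_zero h0⟩⟩
    have hr : lambdaMin S = sInf (Set.range hS.eigenvalues) := by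
      rw [lambdaMin, eigSet_hermitian hS]
    have hne : (Set.range hS.eigenvalues).Nonempty := Set.range_nonempty _
    have hfin : (Set.range hS.eigenvalues).Finite := Set.finite_range _
    have hmem : lambdaMin S ∈ Set.range hS.eigenvalues := by
      rw [hr]; exact hne.csInf_mem hfin
    have hle : ∀ i, lambdaMin S ≤ hS.eigenvalues i := fun i => by
      rw [hr]; exact csInf_le hfin.bddBelow ⟨i, rfl⟩
    constructor
    · intro v
      set U : Matrix (Fin n) (Fin n) ℝ := (hS.eigenvectorUnitary : Matrix (Fin n) (Fin n) ℝ)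
      have hU1 : star U * U = 1 := Unitary.coe_star_mul_self _
      have hU2 : U * star U = 1 := Unitary.coe_mul_star_self _
      have hST : S = U * Matrix.diagonal hS.eigenvalues * star U := by
        have := hS.spectral_theorem
        simpa using this
      have hUt : Uᵀ = star U := by
        rw [← Matrix.conjTranspose_eq_transpose_of_trivial]
        rfl
      set wv : Fin n → ℝ := star U *ᵥ v with hwv
      have hdot : ∀ z : Fin n → ℝ, v ⬝ᵥ (U *ᵥ z) = wv ⬝ᵥ z := by
        intro z
        rw [Matrix.dotProduct_mulVec, ← Matrix.mulVec_transpose, hUt]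
      have hSmul : S *ᵥ v = U *ᵥ (Matrix.diagonal hS.eigenvalues *ᵥ wv) := by
        conv_lhs => rw [hST]
        rw [hwv, Matrix.mulVec_mulVec, Matrix.mulVec_mulVec, Matrix.mul_assoc]
      have hSv : v ⬝ᵥ (S *ᵥ v) = ∑ i, hS.eigenvalues i * (wv i * wv i) := by
        rw [hSmul, hdot]
        simp only [dotProduct, Matrix.mulVec_diagonal]
        exact Finset.sum_congr rfl fun i _ => by ring
      have hveq : U *ᵥ wv = v := by
        rw [hwv, Matrix.mulVec_mulVec, hU2, Matrix.one_mulVec]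
      have hvv : v ⬝ᵥ v = ∑ i, wv i * wv i := by
        calc v ⬝ᵥ v = v ⬝ᵥ (U *ᵥ wv) := by rw [hveq]
          _ = wv ⬝ᵥ wv := hdot wv
          _ = ∑ i, wv i * wv i := rfl
      rw [hSv, hvv, Finset.mul_sum]
      refine Finset.sum_le_sum fun i _ => ?_
      exact mul_le_mul_of_nonneg_right (hle i) (mul_self_nonneg _)
    · intro _
      obtain ⟨i0, hi0⟩ := hmem
      refine ⟨⇑(hS.eigenvectorBasis i0), ?_, by rw [hS.mulVec_eigenvectorBasis i0, hi0]⟩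
      intro h
      exact hS.eigenvectorBasis.orthonormal.ne_zero i0 (by ext j; exact congrFun h j)

lemma dot_self_pos {v : Fin n → ℝ} (hv : v ≠ 0) : 0 < v ⬝ᵥ v := by
  have h1 : 0 ≤ v ⬝ᵥ v := Finset.sum_nonneg fun i _ => mul_self_nonneg _
  rcases h1.lt_or_eq with h | h
  · exact h
  · exfalso
    apply hv
    funext i
    have := Finset.sum_eq_zero_iff_of_nonneg
      (fun i (_ : i ∈ Finset.univ) => mul_self_nonneg (v i)) |>.1 h.symm i (Finset.mem_univ i)
    exact mul_self_eq_zero.1 this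

end Stmt3Aux

theorem stmt3 {n K : ℕ} (hK : 1 ≤ K) (H : Matrix (Fin n) (Fin n) ℝ) (hH : H.PosDef)
    (c : Fin n → ℝ) (f : (Fin n → ℝ) → ℝ)
    (hf : ∀ y, f y = 1 / 2 * (y ⬝ᵥ (H *ᵥ y)) - c ⬝ᵥ y)
    (xstar : Fin n → ℝ) (hxstar : xstar = H⁻¹ *ᵥ c)
    -- the distribution of the random partition, as a weight function
    (w : (Fin n → Fin K) → ℝ) (hw : ∀ π, 0 ≤ w π) (hwsum : ∑ π, w π = 1)
    -- the induced block-diagonal matrix is invertible almost surely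
    (hinv : ∀ π, 0 < w π → IsUnit (maskMat H π).det)
    (ρ : ℝ)
    (hρ : ρ = (K : ℝ)⁻¹ * lambdaMin ((∑ π, w π • (maskMat H π)⁻¹) * H)) :
    (∀ x : Fin n → ℝ,
        (∑ π, w π * f (quadStep H c π x)) - f xstar ≤ (1 - ρ) * (f x - f xstar)) ∧
    (∀ (t : ℕ) (x0 : Fin n → ℝ),
        (∑ p : Fin t → (Fin n → Fin K),
            (∏ i, w (p i)) * f ((List.ofFn p).foldl (fun x π => quadStep H c π x) x0))
          - f xstar ≤ (1 - ρ) ^ t * (f x0 - f xstar)) := by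
  classical
  set E : Matrix (Fin n) (Fin n) ℝ := ∑ π, w π • (maskMat H π)⁻¹ with hE
  have hKpos : (0:ℝ) < (K:ℝ) := by exact_mod_cast Nat.lt_of_lt_of_le Nat.zero_lt_one hK
  have hK0 : (K:ℝ) ≠ 0 := ne_of_gt hKpos
  have hHdet : IsUnit H.det := hH.det_pos.ne'.isUnit
  have hHxstar : H *ᵥ xstar = c := by
    rw [hxstar, Matrix.mulVec_mulVec, Matrix.mul_nonsing_inv _ hHdet, Matrix.one_mulVec]
  have hfd : ∀ y, f y - f xstar = 1/2 * ((y - xstar) ⬝ᵥ (H *ᵥ (y - xstar))) := by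
    intro y
    have h1 : y ⬝ᵥ (H *ᵥ xstar) = c ⬝ᵥ y := by rw [hHxstar, dotProduct_comm]
    have h2 : xstar ⬝ᵥ (H *ᵥ y) = c ⬝ᵥ y := by
      rw [Stmt3Aux.dot_mulVec_comm hH.1, h1]
    have h3 : xstar ⬝ᵥ (H *ᵥ xstar) = c ⬝ᵥ xstar := by rw [hHxstar, dotProduct_comm]
    rw [hf y, hf xstar, Matrix.mulVec_sub, dotProduct_sub, sub_dotProduct,
      sub_dotProduct, h1, h2, h3]
    ring
  have hHsd := hH.posSemidef
  have hmaskPD : ∀ π : Fin n → Fin K, (maskMat H π).PosDef := Stmt3Aux.mask_posDef hH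
  have hmaskInvPD : ∀ π : Fin n → Fin K, ((maskMat H π)⁻¹).PosDef := fun π => (hmaskPD π).inv
  -- facts about E
  have hEapp : ∀ g : Fin n → ℝ, E *ᵥ g = ∑ π, w π • ((maskMat H π)⁻¹ *ᵥ g) := by
    intro g
    rw [hE, Stmt3Aux.sum_mulVec']
    exact Finset.sum_congr rfl fun π _ => Matrix.smul_mulVec _ _ _
  have hEdot : ∀ g : Fin n → ℝ, g ⬝ᵥ (E *ᵥ g) = ∑ π, w π * (g ⬝ᵥ ((maskMat H π)⁻¹ *ᵥ g)) := by
    intro g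
    rw [hEapp, Stmt3Aux.dotProduct_sum']
    exact Finset.sum_congr rfl fun π _ => by
      rw [dotProduct_smul, smul_eq_mul]
  have hEpsd : ∀ g : Fin n → ℝ, 0 ≤ g ⬝ᵥ (E *ᵥ g) := fun g => by
    rw [hEdot]
    exact Finset.sum_nonneg fun π _ =>
      mul_nonneg (hw π) (Stmt3Aux.quad_nonneg (hmaskInvPD π).posSemidef g)
  have hEle : ∀ g : Fin n → ℝ, g ⬝ᵥ (E *ᵥ g) ≤ (K:ℝ) * (g ⬝ᵥ (H⁻¹ *ᵥ g)) := by
    intro g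
    rw [hEdot]
    have hb : ∀ π : Fin n → Fin K,
        g ⬝ᵥ ((maskMat H π)⁻¹ *ᵥ g) ≤ (K:ℝ) * (g ⬝ᵥ (H⁻¹ *ᵥ g)) := by
      intro π
      have hBpd : (((K:ℝ)⁻¹) • H).PosDef := by
        refine Matrix.PosDef.of_dotProduct_mulVec_pos ?_ fun x hx => ?_
        · rw [Matrix.IsHermitian, Matrix.conjTranspose_smul, hH.1.eq, star_trivial]
        · rw [Matrix.smul_mulVec, dotProduct_smul, smul_eq_mul]
          have := hH.dotProduct_mulVec_pos hx
          rw [Stmt3Aux.star_eq] at this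
          positivity
      have hq : ∀ x : Fin n → ℝ,
          x ⬝ᵥ ((((K:ℝ)⁻¹) • H) *ᵥ x) ≤ x ⬝ᵥ (maskMat H π *ᵥ x) := by
        intro x
        rw [Matrix.smul_mulVec, dotProduct_smul, smul_eq_mul]
        have h1 := Stmt3Aux.quad_le_K_mask hHsd π x
        calc (K:ℝ)⁻¹ * (x ⬝ᵥ (H *ᵥ x)) ≤ (K:ℝ)⁻¹ * ((K:ℝ) * (x ⬝ᵥ (maskMat H π *ᵥ x))) :=
              mul_le_mul_of_nonneg_left h1 (by positivity)
          _ = x ⬝ᵥ (maskMat H π *ᵥ x) := by field_simp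
      have hmono := Stmt3Aux.inv_quad_le (hmaskPD π) hBpd hq g
      have hsm : (((K:ℝ)⁻¹) • H)⁻¹ = (K:ℝ) • H⁻¹ := by
        refine Matrix.inv_eq_right_inv ?_
        rw [Matrix.smul_mul, Matrix.mul_smul, smul_smul, inv_mul_cancel₀ hK0, one_smul,
          Matrix.mul_nonsing_inv _ hHdet]
      rw [hsm, Matrix.smul_mulVec, dotProduct_smul, smul_eq_mul] at hmono
      exact hmono
    calc ∑ π, w π * (g ⬝ᵥ ((maskMat H π)⁻¹ *ᵥ g))
        ≤ ∑ π, w π * ((K:ℝ) * (g ⬝ᵥ (H⁻¹ *ᵥ g))) :=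
          Finset.sum_le_sum fun π _ => mul_le_mul_of_nonneg_left (hb π) (hw π)
      _ = (K:ℝ) * (g ⬝ᵥ (H⁻¹ *ᵥ g)) := by rw [← Finset.sum_mul, hwsum, one_mul]
  -- square root of H
  set R : Matrix (Fin n) (Fin n) ℝ := (open scoped MatrixOrder in CFC.sqrt H) with hRdef
  have hRsd : R.PosSemidef := by open scoped MatrixOrder in exact (CFC.sqrt_nonneg H).posSemidef
  have hRR : R * R = H := by open scoped MatrixOrder in exact CFC.sqrt_mul_sqrt_self H hHsd.nonneg
  have hRdet : IsUnit R.det := by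
    have h2 : R.det * R.det = H.det := by rw [← Matrix.det_mul, hRR]
    have hd : R.det ≠ 0 := by
      intro h
      rw [h, mul_zero] at h2
      exact hH.det_pos.ne' h2.symm
    exact hd.isUnit
  have hRinj : ∀ v : Fin n → ℝ, v ≠ 0 → R *ᵥ v ≠ 0 := by
    intro v hv h
    apply hv
    have := Matrix.mulVec_injective_iff_isUnit.2 ((Matrix.isUnit_iff_isUnit_det R).2 hRdet)
    exact this (by rw [h, Matrix.mulVec_zero])
  have hRt : Rᵀ = R := by
    rw [← Matrix.conjTranspose_eq_transpose_of_trivial, hRsd.1.eq]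
  have hRdotR : ∀ (a z : Fin n → ℝ), (R *ᵥ a) ⬝ᵥ z = a ⬝ᵥ (R *ᵥ z) := by
    intro a z
    rw [dotProduct_comm, Stmt3Aux.dot_mulVec_comm hRsd.1]
  set S : Matrix (Fin n) (Fin n) ℝ := R * E * R with hSdef
  have hEherm : E.IsHermitian := by
    have hterm : ∀ π : Fin n → Fin K, (w π • (maskMat H π)⁻¹)ᴴ = w π • (maskMat H π)⁻¹ := by
      intro π
      rw [Matrix.conjTranspose_smul, (hmaskInvPD π).1.eq, star_trivial]
    rw [hE, Matrix.IsHermitian, Matrix.conjTranspose_sum]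
    exact Finset.sum_congr rfl fun π _ => hterm π
  have hSherm : S.IsHermitian := by
    rw [hSdef, Matrix.IsHermitian, Matrix.conjTranspose_mul, Matrix.conjTranspose_mul,
      hRsd.1.eq, hEherm.eq, Matrix.mul_assoc]
  set lam : ℝ := lambdaMin (E * H) with hlam
  have hSR : S * R = R * (E * H) := by
    rw [hSdef, ← hRR]
    simp only [Matrix.mul_assoc]
  have hlamS : lam = lambdaMin S := by
    rw [hlam, lambdaMin, lambdaMin]
    congr 1
    ext μ
    simp only [Set.mem_setOf_eq, Stmt3Aux.hasEigenvalue_iff_exists]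
    constructor
    · rintro ⟨v, hv0, hv⟩
      refine ⟨R *ᵥ v, hRinj v hv0, ?_⟩
      rw [Matrix.mulVec_mulVec, hSR, ← Matrix.mulVec_mulVec, hv, Matrix.mulVec_smul]
    · rintro ⟨u, hu0, hu⟩
      have hRRinv : R * R⁻¹ = 1 := Matrix.mul_nonsing_inv _ hRdet
      have hRinvR : R⁻¹ * R = 1 := Matrix.nonsing_inv_mul _ hRdet
      have hu0' : R⁻¹ *ᵥ u ≠ 0 := by
        intro h
        apply hu0
        have : R *ᵥ (R⁻¹ *ᵥ u) = u := by
          rw [Matrix.mulVec_mulVec, hRRinv, Matrix.one_mulVec]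
        rw [h, Matrix.mulVec_zero] at this
        exact this.symm
      refine ⟨R⁻¹ *ᵥ u, hu0', ?_⟩
      have h1 : (E * H) * R⁻¹ = E * R := by
        rw [← hRR, Matrix.mul_assoc, Matrix.mul_assoc, hRRinv, Matrix.mul_one]
      have h2 : R⁻¹ * S = E * R := by
        rw [hSdef, ← Matrix.mul_assoc, ← Matrix.mul_assoc, hRinvR, Matrix.one_mul]
      rw [Matrix.mulVec_mulVec, h1, ← h2, ← Matrix.mulVec_mulVec, hu, Matrix.mulVec_smul]
  obtain ⟨hrayS, heigS⟩ := Stmt3Aux.lambdaMin_facts hSherm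
  have hSquad : ∀ v : Fin n → ℝ, v ⬝ᵥ (S *ᵥ v) = (R *ᵥ v) ⬝ᵥ (E *ᵥ (R *ᵥ v)) := by
    intro v
    have h1 : S *ᵥ v = R *ᵥ (E *ᵥ (R *ᵥ v)) := by
      rw [hSdef, Matrix.mulVec_mulVec, Matrix.mulVec_mulVec]
    rw [h1, ← hRdotR]
  -- F1
  have hF1 : ∀ e : Fin n → ℝ,
      lam * (e ⬝ᵥ (H *ᵥ e)) ≤ (H *ᵥ e) ⬝ᵥ (E *ᵥ (H *ᵥ e)) := by
    intro e
    have h1 := hrayS (R *ᵥ e)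
    rw [← hlamS] at h1
    have hvv : (R *ᵥ e) ⬝ᵥ (R *ᵥ e) = e ⬝ᵥ (H *ᵥ e) := by
      rw [hRdotR, Matrix.mulVec_mulVec, hRR]
    have hss : (R *ᵥ e) ⬝ᵥ (S *ᵥ (R *ᵥ e)) = (H *ᵥ e) ⬝ᵥ (E *ᵥ (H *ᵥ e)) := by
      rw [hSquad, Matrix.mulVec_mulVec, hRR]
    rw [hvv, hss] at h1
    exact h1
  -- bounds on lam
  have hlam_nonneg : 0 ≤ lam := by
    rcases eq_or_ne n 0 with h0 | h0
    · have : IsEmpty (Fin n) := by rw [h0]; exact Fin.isEmpty'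
      have hempty : {μ : ℝ | Module.End.HasEigenvalue (Matrix.toLin' (E * H)) μ} = ∅ := by
        ext μ
        simp only [Set.mem_setOf_eq, Stmt3Aux.hasEigenvalue_iff_exists, Set.mem_empty_iff_false,
          iff_false, not_exists]
        intro v ⟨hv, _⟩
        exact hv (Subsingleton.elim v 0)
      rw [hlam, lambdaMin, hempty, Real.sInf_empty]
    · obtain ⟨v, hv0, hv⟩ := heigS h0
      have hvvpos := Stmt3Aux.dot_self_pos hv0
      have hq : v ⬝ᵥ (S *ᵥ v) = lam * (v ⬝ᵥ v) := by
        rw [hv, dotProduct_smul, smul_eq_mul, hlamS]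
      have hpos : 0 ≤ v ⬝ᵥ (S *ᵥ v) := by rw [hSquad]; exact hEpsd _
      nlinarith
  have hlam_le : lam ≤ (K:ℝ) := by
    rcases eq_or_ne n 0 with h0 | h0
    · have : IsEmpty (Fin n) := by rw [h0]; exact Fin.isEmpty'
      have hempty : {μ : ℝ | Module.End.HasEigenvalue (Matrix.toLin' (E * H)) μ} = ∅ := by
        ext μ
        simp only [Set.mem_setOf_eq, Stmt3Aux.hasEigenvalue_iff_exists, Set.mem_empty_iff_false,
          iff_false, not_exists]
        intro v ⟨hv, _⟩
        exact hv (Subsingleton.elim v 0)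
      rw [hlam, lambdaMin, hempty, Real.sInf_empty]
      positivity
    · obtain ⟨v, hv0, hv⟩ := heigS h0
      have hvvpos := Stmt3Aux.dot_self_pos hv0
      have hq : v ⬝ᵥ (S *ᵥ v) = lam * (v ⬝ᵥ v) := by
        rw [hv, dotProduct_smul, smul_eq_mul, hlamS]
      have hRHinvR : ∀ z : Fin n → ℝ, (R *ᵥ z) ⬝ᵥ (H⁻¹ *ᵥ (R *ᵥ z)) = z ⬝ᵥ z := by
        intro z
        rw [hRdotR, Matrix.mulVec_mulVec, Matrix.mulVec_mulVec]
        have h1 : R * H⁻¹ * R = 1 := by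
          rw [← hRR, Matrix.mul_inv_rev]
          calc R * (R⁻¹ * R⁻¹) * R = (R * R⁻¹) * (R⁻¹ * R) := by
                simp only [Matrix.mul_assoc]
            _ = 1 := by
                rw [Matrix.mul_nonsing_inv _ hRdet, Matrix.nonsing_inv_mul _ hRdet,
                  Matrix.mul_one]
        rw [h1, Matrix.one_mulVec]
      have hup : v ⬝ᵥ (S *ᵥ v) ≤ (K:ℝ) * (v ⬝ᵥ v) := by
        rw [hSquad]
        calc (R *ᵥ v) ⬝ᵥ (E *ᵥ (R *ᵥ v)) ≤ (K:ℝ) * ((R *ᵥ v) ⬝ᵥ (H⁻¹ *ᵥ (R *ᵥ v))) := hEle _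
          _ = (K:ℝ) * (v ⬝ᵥ v) := by rw [hRHinvR]
      nlinarith
  have hρ_nonneg : 0 ≤ ρ := by
    rw [hρ]
    positivity
  have hρ_le_one : ρ ≤ 1 := by
    rw [hρ]
    calc (K:ℝ)⁻¹ * lam ≤ (K:ℝ)⁻¹ * (K:ℝ) := mul_le_mul_of_nonneg_left hlam_le (by positivity)
      _ = 1 := inv_mul_cancel₀ hK0
  -- one step decrease
  have hstep : ∀ (π : Fin n → Fin K) (x : Fin n → ℝ),
      f (quadStep H c π x) - f xstar ≤ (f x - f xstar)
        - (K:ℝ)⁻¹/2 * ((H *ᵥ x - c) ⬝ᵥ ((maskMat H π)⁻¹ *ᵥ (H *ᵥ x - c))) := by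
    intro π x
    set g : Fin n → ℝ := H *ᵥ x - c with hg
    set d : Fin n → ℝ := (maskMat H π)⁻¹ *ᵥ g with hd
    set e : Fin n → ℝ := x - xstar with he
    have hdiff : quadStep H c π x - xstar = e - (K:ℝ)⁻¹ • d := by
      rw [quadStep, he, ← hg, ← hd]
      abel
    have hge : g = H *ᵥ e := by rw [hg, he, Matrix.mulVec_sub, hHxstar]
    rw [hfd, hfd x, hdiff, ← he]
    have hcross : e ⬝ᵥ (H *ᵥ d) = g ⬝ᵥ d := by
      rw [Stmt3Aux.dot_mulVec_comm hH.1 e d, ← hge]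
      exact dotProduct_comm _ _
    have hcross2 : d ⬝ᵥ (H *ᵥ e) = g ⬝ᵥ d := by
      rw [← hge]
      exact dotProduct_comm _ _
    have hexp : (e - (K:ℝ)⁻¹ • d) ⬝ᵥ (H *ᵥ (e - (K:ℝ)⁻¹ • d))
        = e ⬝ᵥ (H *ᵥ e) - 2 * (K:ℝ)⁻¹ * (g ⬝ᵥ d) + (K:ℝ)⁻¹^2 * (d ⬝ᵥ (H *ᵥ d)) := by
      simp only [Matrix.mulVec_sub, Matrix.mulVec_smul, dotProduct_sub,
        sub_dotProduct, dotProduct_smul, smul_dotProduct, smul_eq_mul]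
      rw [hcross, hcross2]
      ring
    rw [hexp]
    have hdHd : d ⬝ᵥ (H *ᵥ d) ≤ (K:ℝ) * (g ⬝ᵥ d) := by
      have h1 := Stmt3Aux.quad_le_K_mask hHsd π d
      have h2 : d ⬝ᵥ (maskMat H π *ᵥ d) = g ⬝ᵥ d := by
        conv_lhs => rw [hd]
        rw [Matrix.mulVec_mulVec, Matrix.mul_nonsing_inv _ (hmaskPD π).det_pos.ne'.isUnit,
          Matrix.one_mulVec, ← hd]
        exact dotProduct_comm _ _
      rw [h2] at h1
      exact h1
    have hgd_nonneg : 0 ≤ g ⬝ᵥ d := by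
      rw [hd]
      exact Stmt3Aux.quad_nonneg (hmaskInvPD π).posSemidef g
    have h3 : (K:ℝ)⁻¹^2 * (d ⬝ᵥ (H *ᵥ d)) ≤ (K:ℝ)⁻¹^2 * ((K:ℝ) * (g ⬝ᵥ d)) :=
      mul_le_mul_of_nonneg_left hdHd (by positivity)
    have h4 : (K:ℝ)⁻¹^2 * ((K:ℝ) * (g ⬝ᵥ d)) = (K:ℝ)⁻¹ * (g ⬝ᵥ d) := by
      rw [← mul_assoc, pow_two, mul_assoc ((K:ℝ)⁻¹), inv_mul_cancel₀ hK0, mul_one]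
    linarith
  -- part 1
  have hpart1 : ∀ x : Fin n → ℝ,
      (∑ π, w π * f (quadStep H c π x)) - f xstar ≤ (1 - ρ) * (f x - f xstar) := by
    intro x
    set g : Fin n → ℝ := H *ᵥ x - c with hg
    have hsum1 : (∑ π, w π * f (quadStep H c π x)) - f xstar
        = ∑ π, w π * (f (quadStep H c π x) - f xstar) := by
      simp only [mul_sub]
      rw [Finset.sum_sub_distrib, ← Finset.sum_mul, hwsum, one_mul]
    rw [hsum1]
    have hge : g = H *ᵥ (x - xstar) := by rw [hg, Matrix.mulVec_sub, hHxstar]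
    have h1 := hF1 (x - xstar)
    have h2 : (x - xstar) ⬝ᵥ (H *ᵥ (x - xstar)) = 2 * (f x - f xstar) := by
      rw [hfd x]; ring
    rw [h2, ← hge] at h1
    calc ∑ π, w π * (f (quadStep H c π x) - f xstar)
        ≤ ∑ π, w π * ((f x - f xstar) - (K:ℝ)⁻¹/2 * (g ⬝ᵥ ((maskMat H π)⁻¹ *ᵥ g))) :=
          Finset.sum_le_sum fun π _ => mul_le_mul_of_nonneg_left (hstep π x) (hw π)
      _ = (f x - f xstar) - (K:ℝ)⁻¹/2 * (g ⬝ᵥ (E *ᵥ g)) := by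
          rw [hEdot g, Finset.mul_sum]
          conv_rhs => rw [show (f x - f xstar) = ∑ π, w π * (f x - f xstar) from by
            rw [← Finset.sum_mul, hwsum, one_mul]]
          rw [← Finset.sum_sub_distrib]
          exact Finset.sum_congr rfl fun π _ => by ring
      _ ≤ (1 - ρ) * (f x - f xstar) := by
          rw [hρ]
          nlinarith [mul_le_mul_of_nonneg_left h1 (show (0:ℝ) ≤ (K:ℝ)⁻¹/2 by positivity)]
  refine ⟨hpart1, ?_⟩
  intro t
  induction t with
  | zero =>
    intro x0
    have h0 : (∑ p : Fin 0 → (Fin n → Fin K),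
        (∏ i, w (p i)) * f ((List.ofFn p).foldl (fun x π => quadStep H c π x) x0)) = f x0 := by
      rw [Fintype.sum_subsingleton _ (Fin.elim0 : Fin 0 → (Fin n → Fin K))]
      simp
    rw [h0, pow_zero, one_mul]
  | succ t ih =>
    intro x0
    have hsplit : (∑ p : Fin (t+1) → (Fin n → Fin K),
        (∏ i, w (p i)) * f ((List.ofFn p).foldl (fun x π => quadStep H c π x) x0))
        = ∑ π0, w π0 * ∑ q : Fin t → (Fin n → Fin K),
            (∏ i, w (q i)) * f ((List.ofFn q).foldl (fun x π => quadStep H c π x)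
              (quadStep H c π0 x0)) := by
      rw [← Equiv.sum_comp (Fin.consEquiv fun _ : Fin (t+1) => (Fin n → Fin K))
        (fun p => (∏ i, w (p i)) * f ((List.ofFn p).foldl (fun x π => quadStep H c π x) x0))]
      rw [Fintype.sum_prod_type]
      refine Finset.sum_congr rfl fun π0 _ => ?_
      rw [Finset.mul_sum]
      refine Finset.sum_congr rfl fun q _ => ?_
      have e1 : (∏ i, w ((Fin.consEquiv fun _ : Fin (t+1) => (Fin n → Fin K)) (π0, q) i))
          = w π0 * ∏ i, w (q i) := by
        rw [Fin.prod_univ_succ]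
        simp [Fin.consEquiv]
      have e2 : List.ofFn ((Fin.consEquiv fun _ : Fin (t+1) => (Fin n → Fin K)) (π0, q))
          = π0 :: List.ofFn q := by
        rw [List.ofFn_succ]
        simp [Fin.consEquiv]
      rw [e1, e2, List.foldl_cons]
      ring
    rw [hsplit]
    set T : (Fin n → Fin K) → ℝ := fun π0 => ∑ q : Fin t → (Fin n → Fin K),
        (∏ i, w (q i)) * f ((List.ofFn q).foldl (fun x π => quadStep H c π x)
          (quadStep H c π0 x0)) with hT
    have hTle : ∀ π0, T π0 - f xstar ≤ (1-ρ)^t * (f (quadStep H c π0 x0) - f xstar) :=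
      fun π0 => ih (quadStep H c π0 x0)
    have hsum1 : (∑ π0, w π0 * T π0) - f xstar = ∑ π0, w π0 * (T π0 - f xstar) := by
      simp only [mul_sub]
      rw [Finset.sum_sub_distrib, ← Finset.sum_mul, hwsum, one_mul]
    rw [hsum1]
    have hpow : (0:ℝ) ≤ (1-ρ)^t := pow_nonneg (by linarith) t
    calc ∑ π0, w π0 * (T π0 - f xstar)
        ≤ ∑ π0, w π0 * ((1-ρ)^t * (f (quadStep H c π0 x0) - f xstar)) :=
          Finset.sum_le_sum fun π0 _ => mul_le_mul_of_nonneg_left (hTle π0) (hw π0)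
      _ = (1-ρ)^t * ((∑ π0, w π0 * f (quadStep H c π0 x0)) - f xstar) := by
          have hxx : (∑ π0, w π0 * f (quadStep H c π0 x0)) - f xstar
              = ∑ π0, w π0 * (f (quadStep H c π0 x0) - f xstar) := by
            simp only [mul_sub]
            rw [Finset.sum_sub_distrib, ← Finset.sum_mul, hwsum, one_mul]
          rw [hxx, Finset.mul_sum]
          exact Finset.sum_congr rfl fun π0 _ => by ring
      _ ≤ (1-ρ)^t * ((1 - ρ) * (f x0 - f xstar)) :=
          mul_le_mul_of_nonneg_left (hpart1 x0) hpow
      _ = (1-ρ)^(t+1) * (f x0 - f xstar) := by ring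
end

section
/- Let $\ell : \mathbb{R}^m \to \mathbb{R}$ be differentiable and $\gamma$-smooth (i.e. $\ell(v+w) \le \ell(v) + \nabla\ell(v)^\top w + \tfrac{\gamma}{2}\|w\|^2$ for all $v,w$), let $A \in \mathbb{R}^{m\times n}$, $f(x) = \ell(Ax)$, and $M := A^\top A$. Let $\mathcal{P}$ be a partition of $[n]$ into $K$ blocks such that $M_\mathcal{P}$ (the block-diagonal restriction of $M$) is invertible. Then one step $x_+ = x - \tfrac{1}{K\gamma} M_\mathcal{P}^{-1}\nabla f(x)$ satisfies $f(x) - f(x_+) \geq \tfrac{1}{2K\gamma}\, \nabla\ell(Ax)^\top A M_\mathcal{P}^{-1} A^\top \nabla\ell(Ax)$. -/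
open Matrix

lemma blockIneq {m n K : ℕ} (A : Matrix (Fin m) (Fin n) ℝ) (π : Fin n → Fin K)
    (Δ : Fin n → ℝ) :
    Δ ⬝ᵥ ((Aᵀ * A) *ᵥ Δ) ≤ (K : ℝ) * (Δ ⬝ᵥ (maskMat (Aᵀ * A) π *ᵥ Δ)) := by
  classical
  set v : Fin K → Fin m → ℝ := fun k p => ∑ i, A p i * (if π i = k then Δ i else 0) with hv
  set c : Fin K → Fin n → Fin n → ℝ :=
    fun k i j => (if π i = k then Δ i else 0) * (if π j = k then Δ j else 0) with hc
  set S : Fin n → Fin n → ℝ := fun i j => ∑ p, A p i * A p j with hS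
  have h1 : Δ ⬝ᵥ ((Aᵀ * A) *ᵥ Δ) = ∑ p, (∑ k, v k p) ^ 2 := by
    have hAv : ∀ p, (A *ᵥ Δ) p = ∑ k, v k p := by
      intro p
      rw [Finset.sum_comm]
      simp [hv, Matrix.mulVec, dotProduct, Finset.sum_ite_eq]
    have : Δ ⬝ᵥ ((Aᵀ * A) *ᵥ Δ) = (A *ᵥ Δ) ⬝ᵥ (A *ᵥ Δ) := by
      rw [← Matrix.mulVec_mulVec, Matrix.dotProduct_mulVec, Matrix.vecMul_transpose]
    rw [this]
    simp only [dotProduct, hAv, sq]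
  have hk : ∀ i j, (∑ k, c k i j) = if π i = π j then Δ i * Δ j else 0 := by
    intro i j
    simp only [hc, ite_mul, zero_mul, mul_ite, mul_zero]
    rw [Finset.sum_ite_eq Finset.univ (π j)]
    simp
  have h2 : Δ ⬝ᵥ (maskMat (Aᵀ * A) π *ᵥ Δ) = ∑ k, ∑ p, (v k p) ^ 2 := by
    have hvexp : ∀ k p, (v k p) ^ 2 = ∑ i, ∑ j, c k i j * (A p i * A p j) := by
      intro k p
      rw [sq, hv, Finset.sum_mul_sum]
      refine Finset.sum_congr rfl fun i _ => Finset.sum_congr rfl fun j _ => ?_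
      simp only [hc]; ring
    have step1 : ∀ k, ∑ p, ∑ i, ∑ j, c k i j * (A p i * A p j)
        = ∑ i, ∑ j, c k i j * S i j := by
      intro k
      rw [Finset.sum_comm]
      refine Finset.sum_congr rfl fun i _ => ?_
      rw [Finset.sum_comm]
      refine Finset.sum_congr rfl fun j _ => ?_
      rw [← Finset.mul_sum]
    have step2 : ∑ k, ∑ i, ∑ j, c k i j * S i j = ∑ i, ∑ j, (∑ k, c k i j) * S i j := by
      rw [Finset.sum_comm]
      refine Finset.sum_congr rfl fun i _ => ?_
      rw [Finset.sum_comm]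
      refine Finset.sum_congr rfl fun j _ => ?_
      rw [Finset.sum_mul]
    have lhs : Δ ⬝ᵥ (maskMat (Aᵀ * A) π *ᵥ Δ)
        = ∑ i, ∑ j, (if π i = π j then Δ i * Δ j else 0) * S i j := by
      simp only [dotProduct, Matrix.mulVec, maskMat, Matrix.of_apply,
        Matrix.mul_apply, Matrix.transpose_apply, Finset.mul_sum, hS]
      refine Finset.sum_congr rfl fun i _ => Finset.sum_congr rfl fun j _ => ?_
      split
      · rw [Finset.sum_mul, Finset.mul_sum]
        exact Finset.sum_congr rfl fun p _ => by ring
      · simp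
    simp only [hvexp, step1, step2, hk, lhs]
  rw [h1, h2]
  calc ∑ p, (∑ k, v k p) ^ 2 ≤ ∑ p, (K : ℝ) * ∑ k, (v k p) ^ 2 := by
        apply Finset.sum_le_sum; intro p _
        have := sq_sum_le_card_mul_sum_sq (s := (Finset.univ : Finset (Fin K)))
          (f := fun k => v k p)
        simpa using this
    _ = (K : ℝ) * ∑ k, ∑ p, (v k p) ^ 2 := by
        rw [← Finset.mul_sum, Finset.sum_comm]

theorem stmt4 {m n K : ℕ} (hK : 1 ≤ K) (γ : ℝ) (hγ : 0 < γ)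
    (ℓ : (Fin m → ℝ) → ℝ) (g : (Fin m → ℝ) → (Fin m → ℝ))
    (hdiff : Differentiable ℝ ℓ)
    (hgrad : ∀ v u, fderiv ℝ ℓ v u = g v ⬝ᵥ u)
    (hsmooth : ∀ v u, ℓ (v + u) ≤ ℓ v + g v ⬝ᵥ u + γ / 2 * (u ⬝ᵥ u))
    (A : Matrix (Fin m) (Fin n) ℝ)
    (M : Matrix (Fin n) (Fin n) ℝ) (hM : M = Aᵀ * A)
    (π : Fin n → Fin K) (hMinv : IsUnit (maskMat M π).det)
    (f : (Fin n → ℝ) → ℝ) (hf : ∀ x, f x = ℓ (A *ᵥ x))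
    (x xplus : Fin n → ℝ)
    (hxplus : xplus = x - (1 / ((K : ℝ) * γ)) • ((maskMat M π)⁻¹ *ᵥ (Aᵀ *ᵥ g (A *ᵥ x)))) :
    f x - f xplus ≥
      1 / (2 * (K : ℝ) * γ) *
        (g (A *ᵥ x) ⬝ᵥ ((A * (maskMat M π)⁻¹ * Aᵀ) *ᵥ g (A *ᵥ x))) := by
  subst hM
  set G := g (A *ᵥ x) with hG
  set w := Aᵀ *ᵥ G with hw
  set P := maskMat (Aᵀ * A) π with hP
  set N := P⁻¹ with hN
  have hKpos : (0 : ℝ) < K := by exact_mod_cast hK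
  set cc : ℝ := 1 / ((K : ℝ) * γ) with hcc
  set Δ : Fin n → ℝ := -(cc • (N *ᵥ w)) with hΔ
  have hxp : xplus = x + Δ := by rw [hxplus, sub_eq_add_neg]
  have hdot : ∀ u, G ⬝ᵥ (A *ᵥ u) = w ⬝ᵥ u := by
    intro u
    rw [Matrix.dotProduct_mulVec, hw, Matrix.mulVec_transpose]
  have hquad : (A *ᵥ Δ) ⬝ᵥ (A *ᵥ Δ) = Δ ⬝ᵥ ((Aᵀ * A) *ᵥ Δ) := by
    symm
    rw [← Matrix.mulVec_mulVec, Matrix.dotProduct_mulVec, Matrix.vecMul_transpose]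
  have hPN : P * N = 1 := Matrix.mul_nonsing_inv _ hMinv
  set S : ℝ := w ⬝ᵥ (N *ᵥ w) with hS
  have hPu : P *ᵥ (N *ᵥ w) = w := by rw [Matrix.mulVec_mulVec, hPN, Matrix.one_mulVec]
  have hwΔ : w ⬝ᵥ Δ = -(cc * S) := by
    rw [hΔ, dotProduct_neg, dotProduct_smul, hS]
    simp [smul_eq_mul]
  have hΔPΔ : Δ ⬝ᵥ (P *ᵥ Δ) = cc ^ 2 * S := by
    rw [hΔ, Matrix.mulVec_neg, Matrix.mulVec_smul, hPu]
    simp only [dotProduct_neg, neg_dotProduct, smul_dotProduct,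
      dotProduct_smul, neg_neg, smul_eq_mul]
    rw [dotProduct_comm]
    ring
  have hRHS : G ⬝ᵥ ((A * N * Aᵀ) *ᵥ G) = S := by
    rw [← Matrix.mulVec_mulVec, ← Matrix.mulVec_mulVec, hdot, hS, hw]
  have hkey := blockIneq A π Δ
  have hsm : ℓ (A *ᵥ x + A *ᵥ Δ) ≤ ℓ (A *ᵥ x) + w ⬝ᵥ Δ + γ / 2 * (Δ ⬝ᵥ ((Aᵀ * A) *ᵥ Δ)) := by
    rw [← hdot, ← hquad]
    exact hsmooth (A *ᵥ x) (A *ᵥ Δ)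
  rw [hRHS]
  have heq : f x - f xplus = ℓ (A *ᵥ x) - ℓ (A *ᵥ x + A *ᵥ Δ) := by
    rw [hf, hf, hxp, Matrix.mulVec_add]
  have step : f x - f xplus ≥ -(w ⬝ᵥ Δ) - γ / 2 * ((K : ℝ) * (Δ ⬝ᵥ (P *ᵥ Δ))) := by
    rw [heq]
    have h2 : γ / 2 * (Δ ⬝ᵥ ((Aᵀ * A) *ᵥ Δ)) ≤ γ / 2 * ((K : ℝ) * (Δ ⬝ᵥ (P *ᵥ Δ))) := by
      apply mul_le_mul_of_nonneg_left _ (by linarith)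
      exact hkey
    linarith
  have hfin : -(w ⬝ᵥ Δ) - γ / 2 * ((K : ℝ) * (Δ ⬝ᵥ (P *ᵥ Δ))) = 1 / (2 * (K : ℝ) * γ) * S := by
    rw [hwΔ, hΔPΔ, hcc]
    field_simp
    ring
  linarith [step, hfin.ge, hfin.le]
end

section
/- Let $\ell : \mathbb{R}^m \to \mathbb{R}$ be $\gamma$-smooth, satisfy the Polyak–Łojasiewicz condition $\tfrac12\|\nabla\ell(v)\|^2 \ge \mu(\ell(v) - \ell^\star)$ with $\ell^\star = \min_v \ell(v)$ and $\mu > 0$. Let $A \in \mathbb{R}^{m\times n}$, $f(x) = \ell(Ax)$, $M = A^\top A$, and suppose $\min_x f(x) = \ell^\star$ is attained. For random partitions $\mathcal{P}^t$ of $[n]$ into $K$ blocks (with $M_{\mathcal{P}^t}$ invertible a.s.) and updates $x_{t+1} = x_t - \tfrac{1}{K\gamma} M_{\mathcal{P}^t}^{-1}\nabla f(x_t)$, define $\rho := \tfrac{\mu}{K\gamma}\lambda_{\min}\big(A\,\mathbb{E}[M_{\mathcal{P}^t}^{-1}]\,A^\top\big)$. Then $\mathbb{E}[f(x_t)] - f^\star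 \le (1-\rho)^t (f(x_0) - f^\star)$. -/
open Matrix

lemma eig_set_eq {m : ℕ} {B : Matrix (Fin m) (Fin m) ℝ} (hB : B.IsHermitian) :
    {μ : ℝ | Module.End.HasEigenvalue (Matrix.toLin' B) μ} = Set.range hB.eigenvalues := by
  ext μ
  rw [Set.mem_setOf_eq, Module.End.hasEigenvalue_iff_mem_spectrum,
    ← hB.spectrum_real_eq_range_eigenvalues]
  have : spectrum ℝ (Matrix.toLin' B) = spectrum ℝ B :=
    AlgEquiv.spectrum_eq Matrix.toLinAlgEquiv' B
  rw [this]

lemma lambdaMin_quad {m : ℕ} {B : Matrix (Fin m) (Fin m) ℝ} (hB : B.IsHermitian)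
    (v : Fin m → ℝ) : lambdaMin B * (v ⬝ᵥ v) ≤ v ⬝ᵥ (B *ᵥ v) := by
  rcases Nat.eq_zero_or_pos m with hm | hm
  · subst hm
    simp [dotProduct]
  · have hmne : Nonempty (Fin m) := ⟨⟨0, hm⟩⟩
    set U : Matrix (Fin m) (Fin m) ℝ := (hB.eigenvectorUnitary : Matrix (Fin m) (Fin m) ℝ)
    have hUU : U * star U = 1 := Matrix.mem_unitaryGroup_iff.mp hB.eigenvectorUnitary.2
    have hsU : star U = Uᵀ := by
      ext i j; simp [Matrix.star_apply]
    set u : Fin m → ℝ := star U *ᵥ v with hu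
    have hUu : U *ᵥ u = v := by
      rw [hu, mulVec_mulVec, hUU, one_mulVec]
    have hmove : ∀ z : Fin m → ℝ, v ⬝ᵥ (U *ᵥ z) = u ⬝ᵥ z := by
      intro z
      rw [dotProduct_mulVec, ← mulVec_transpose, ← hsU, ← hu]
    have h2 : v ⬝ᵥ v = u ⬝ᵥ u := by
      nth_rewrite 2 [← hUu]
      rw [hmove]
    have h1 : v ⬝ᵥ (B *ᵥ v) = ∑ i, hB.eigenvalues i * (u i * u i) := by
      conv_lhs => rw [hB.spectral_theorem, Unitary.conjStarAlgAut_apply]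
      rw [← mulVec_mulVec, ← mulVec_mulVec, hmove, ← hu]
      simp [dotProduct, Matrix.mulVec_diagonal]
      ring_nf
      apply Finset.sum_congr rfl
      intro i _
      ring
    have hmin : ∀ i, lambdaMin B ≤ hB.eigenvalues i := by
      intro i
      rw [lambdaMin, eig_set_eq hB]
      exact csInf_le (Set.finite_range _).bddBelow ⟨i, rfl⟩
    rw [h1, h2]
    have : u ⬝ᵥ u = ∑ i, u i * u i := rfl
    rw [this, Finset.mul_sum]
    apply Finset.sum_le_sum
    intro i _
    exact mul_le_mul_of_nonneg_right (hmin i) (mul_self_nonneg _)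

lemma lambdaMin_nonneg {m : ℕ} {B : Matrix (Fin m) (Fin m) ℝ}
    (hpsd : ∀ v : Fin m → ℝ, 0 ≤ v ⬝ᵥ (B *ᵥ v)) : 0 ≤ lambdaMin B := by
  apply Real.sInf_nonneg
  rintro μ hμ
  obtain ⟨v, hv⟩ := hμ.exists_hasEigenvector
  have hBv : B *ᵥ v = μ • v := by
    have := hv.apply_eq_smul
    rwa [Matrix.toLin'_apply] at this
  have hv0 : 0 < v ⬝ᵥ v := by
    rcases lt_or_eq_of_le (Finset.sum_nonneg fun i _ => mul_self_nonneg (v i) : (0:ℝ) ≤ v ⬝ᵥ v) with h | h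
    · exact h
    · exact absurd (dotProduct_self_eq_zero.mp h.symm) hv.right
  have := hpsd v
  rw [hBv, dotProduct_smul, smul_eq_mul] at this
  exact nonneg_of_mul_nonneg_right (by linarith [this] : 0 ≤ v ⬝ᵥ v * μ) hv0

def maskv {n K : ℕ} (π : Fin n → Fin K) (k : Fin K) (x : Fin n → ℝ) : Fin n → ℝ :=
  fun i => if π i = k then x i else 0

def colMask {m n K : ℕ} (A : Matrix (Fin m) (Fin n) ℝ) (π : Fin n → Fin K) (k : Fin K) :
    Matrix (Fin m) (Fin n) ℝ :=
  Matrix.of fun s i => if π i = k then A s i else 0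

lemma sum_maskv {n K : ℕ} (π : Fin n → Fin K) (x : Fin n → ℝ) :
    ∑ k, maskv π k x = x := by
  funext i
  simp only [Finset.sum_apply, maskv]
  simp

lemma colMask_mulVec {m n K : ℕ} (A : Matrix (Fin m) (Fin n) ℝ) (π : Fin n → Fin K)
    (k : Fin K) (x : Fin n → ℝ) : colMask A π k *ᵥ x = A *ᵥ maskv π k x := by
  funext s
  simp only [mulVec, dotProduct, colMask, maskv, Matrix.of_apply]
  apply Finset.sum_congr rfl
  intro i _
  by_cases h : π i = k <;> simp [h]

lemma maskMat_eq {m n K : ℕ} (A : Matrix (Fin m) (Fin n) ℝ) (π : Fin n → Fin K) :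
    maskMat (Aᵀ * A) π = ∑ k, (colMask A π k)ᵀ * colMask A π k := by
  ext i j
  simp only [maskMat, Matrix.of_apply, Matrix.sum_apply, Matrix.mul_apply,
    Matrix.transpose_apply, colMask]
  rw [Finset.sum_comm]
  by_cases h : π i = π j
  · simp only [h, if_true]
    apply Finset.sum_congr rfl
    intro s _
    rw [Finset.sum_eq_single (π j)]
    · simp [h]
    · intro b _ hb
      rw [if_neg (fun e => hb e.symm), zero_mul]
    · simp
  · simp only [h, if_false]
    symm
    apply Finset.sum_eq_zero
    intro s _
    apply Finset.sum_eq_zero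
    intro k _
    by_cases h1 : π i = k <;> by_cases h2 : π j = k <;> simp_all

lemma sumMulVec {n : ℕ} {ι : Type*} [Fintype ι] (N : ι → Matrix (Fin n) (Fin n) ℝ)
    (x : Fin n → ℝ) : (∑ k, N k) *ᵥ x = ∑ k, N k *ᵥ x := by
  funext i
  simp only [mulVec, dotProduct, Matrix.sum_apply, Finset.sum_apply, Finset.sum_mul]
  rw [Finset.sum_comm]

lemma dotSumRight {n : ℕ} {ι : Type*} [Fintype ι] (a : Fin n → ℝ) (b : ι → Fin n → ℝ) :
    a ⬝ᵥ (∑ k, b k) = ∑ k, a ⬝ᵥ b k := by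
  simp only [dotProduct, Finset.sum_apply, Finset.mul_sum]
  rw [Finset.sum_comm]

lemma sumDotLeft {n : ℕ} {ι : Type*} [Fintype ι] (a : ι → Fin n → ℝ) (b : Fin n → ℝ) :
    (∑ k, a k) ⬝ᵥ b = ∑ k, a k ⬝ᵥ b := by
  simp only [dotProduct, Finset.sum_apply, Finset.sum_mul]
  rw [Finset.sum_comm]

lemma quad_mask {m n K : ℕ} (A : Matrix (Fin m) (Fin n) ℝ) (π : Fin n → Fin K)
    (x : Fin n → ℝ) :
    x ⬝ᵥ (maskMat (Aᵀ * A) π *ᵥ x)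
      = ∑ k, (A *ᵥ maskv π k x) ⬝ᵥ (A *ᵥ maskv π k x) := by
  rw [maskMat_eq, sumMulVec, dotSumRight]
  apply Finset.sum_congr rfl
  intro k _
  rw [← mulVec_mulVec, dotProduct_mulVec, vecMul_transpose, colMask_mulVec]

lemma quad_mask_nonneg {m n K : ℕ} (A : Matrix (Fin m) (Fin n) ℝ) (π : Fin n → Fin K)
    (x : Fin n → ℝ) : 0 ≤ x ⬝ᵥ (maskMat (Aᵀ * A) π *ᵥ x) := by
  rw [quad_mask]
  exact Finset.sum_nonneg fun k _ => Finset.sum_nonneg fun i _ => mul_self_nonneg _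

lemma dot_sq_sum {m K : ℕ} (v : Fin K → Fin m → ℝ) :
    (∑ k, v k) ⬝ᵥ (∑ k, v k) ≤ (K : ℝ) * ∑ k, v k ⬝ᵥ v k := by
  have expand : (∑ k, v k) ⬝ᵥ (∑ k, v k) = ∑ k, ∑ l, v k ⬝ᵥ v l := by
    rw [sumDotLeft]
    exact Finset.sum_congr rfl fun k _ => dotSumRight _ _
  rw [expand]
  have hkl : ∀ k l, v k ⬝ᵥ v l ≤ (v k ⬝ᵥ v k + v l ⬝ᵥ v l) / 2 := by
    intro k l
    have h0 : 0 ≤ (v k - v l) ⬝ᵥ (v k - v l) :=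
      Finset.sum_nonneg fun i _ => mul_self_nonneg _
    have hexp : (v k - v l) ⬝ᵥ (v k - v l)
        = v k ⬝ᵥ v k - 2 * (v k ⬝ᵥ v l) + v l ⬝ᵥ v l := by
      rw [sub_dotProduct, dotProduct_sub, dotProduct_sub, dotProduct_comm (v l) (v k)]
      ring
    rw [hexp] at h0
    linarith
  calc ∑ k, ∑ l, v k ⬝ᵥ v l ≤ ∑ k, ∑ l, (v k ⬝ᵥ v k + v l ⬝ᵥ v l) / 2 :=
        Finset.sum_le_sum fun k _ => Finset.sum_le_sum fun l _ => hkl k l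
    _ = (K : ℝ) * ∑ k, v k ⬝ᵥ v k := by
        have h1 : ∀ k, ∑ l, (v k ⬝ᵥ v k + v l ⬝ᵥ v l)
            = (K : ℝ) * (v k ⬝ᵥ v k) + ∑ l, v l ⬝ᵥ v l := by
          intro k
          rw [Finset.sum_add_distrib, Finset.sum_const, Finset.card_univ,
            Fintype.card_fin, nsmul_eq_mul]
        have h2 : ∑ k, ∑ l, (v k ⬝ᵥ v k + v l ⬝ᵥ v l)
            = 2 * (K : ℝ) * ∑ k, v k ⬝ᵥ v k := by
          rw [Finset.sum_congr rfl fun k _ => h1 k, Finset.sum_add_distrib,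
            ← Finset.mul_sum, Finset.sum_const, Finset.card_univ, Fintype.card_fin,
            nsmul_eq_mul]
          ring
        simp only [← Finset.sum_div]
        rw [h2]
        ring

lemma key_cauchy {m n K : ℕ} (A : Matrix (Fin m) (Fin n) ℝ) (π : Fin n → Fin K)
    (x : Fin n → ℝ) :
    (A *ᵥ x) ⬝ᵥ (A *ᵥ x) ≤ (K : ℝ) * (x ⬝ᵥ (maskMat (Aᵀ * A) π *ᵥ x)) := by
  have hx : A *ᵥ x = ∑ k, A *ᵥ maskv π k x := by
    conv_lhs => rw [← sum_maskv π x]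
    funext i
    simp only [mulVec, dotProduct, Finset.sum_apply, Finset.mul_sum]
    rw [Finset.sum_comm]
  rw [quad_mask, hx]
  exact dot_sq_sum _

noncomputable def Sfun {n K : ℕ} (w : (Fin n → Fin K) → ℝ) (f : (Fin n → ℝ) → ℝ)
    (step : (Fin n → ℝ) → (Fin n → Fin K) → (Fin n → ℝ)) (t : ℕ) (x0 : Fin n → ℝ) : ℝ :=
  ∑ p : Fin t → (Fin n → Fin K), (∏ i, w (p i)) * f ((List.ofFn p).foldl step x0)

lemma Sfun_zero {n K : ℕ} (w : (Fin n → Fin K) → ℝ) (f : (Fin n → ℝ) → ℝ)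
    (step : (Fin n → ℝ) → (Fin n → Fin K) → (Fin n → ℝ)) (x0 : Fin n → ℝ) :
    Sfun w f step 0 x0 = f x0 := by
  simp [Sfun]

lemma Sfun_succ {n K : ℕ} (w : (Fin n → Fin K) → ℝ) (f : (Fin n → ℝ) → ℝ)
    (step : (Fin n → ℝ) → (Fin n → Fin K) → (Fin n → ℝ)) (t : ℕ) (x0 : Fin n → ℝ) :
    Sfun w f step (t + 1) x0 = ∑ a, w a * Sfun w f step t (step x0 a) := by
  rw [Sfun, ← Equiv.sum_comp (Fin.consEquiv (fun _ => Fin n → Fin K))]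
  rw [Fintype.sum_prod_type]
  apply Finset.sum_congr rfl
  intro a _
  rw [Sfun, Finset.mul_sum]
  apply Finset.sum_congr rfl
  intro q _
  simp only [Fin.consEquiv_apply]
  rw [Fin.prod_univ_succ]
  simp only [Fin.cons_zero, Fin.cons_succ]
  rw [List.ofFn_succ]
  simp only [Fin.cons_zero, Fin.cons_succ, List.foldl_cons]
  ring_nf
  congr 1

theorem stmt5 {m n K : ℕ} (hK : 1 ≤ K) (γ μ : ℝ) (hγ : 0 < γ) (hμ : 0 < μ)
    (ℓ : (Fin m → ℝ) → ℝ) (g : (Fin m → ℝ) → (Fin m → ℝ))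
    (hdiff : Differentiable ℝ ℓ)
    (hgrad : ∀ v u, fderiv ℝ ℓ v u = g v ⬝ᵥ u)
    (hsmooth : ∀ v u, ℓ (v + u) ≤ ℓ v + g v ⬝ᵥ u + γ / 2 * (u ⬝ᵥ u))
    (lstar : ℝ) (hlb : ∀ v, lstar ≤ ℓ v)
    -- Polyak–Łojasiewicz condition with constant μ
    (hPL : ∀ v, 1 / 2 * (g v ⬝ᵥ g v) ≥ μ * (ℓ v - lstar))
    (A : Matrix (Fin m) (Fin n) ℝ)
    (M : Matrix (Fin n) (Fin n) ℝ) (hM : M = Aᵀ * A)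
    (f : (Fin n → ℝ) → ℝ) (hf : ∀ x, f x = ℓ (A *ᵥ x))
    -- the minimum of f is attained and equals ℓ⋆
    (hattained : ∃ xs, f xs = lstar)
    -- the distribution of the random partition, as a weight function
    (w : (Fin n → Fin K) → ℝ) (hw : ∀ π, 0 ≤ w π) (hwsum : ∑ π, w π = 1)
    (hinv : ∀ π, 0 < w π → IsUnit (maskMat M π).det)
    (ρ : ℝ)
    (hρ : ρ = μ / ((K : ℝ) * γ) *
        lambdaMin (A * (∑ π, w π • (maskMat M π)⁻¹) * Aᵀ)) :
    ∀ (t : ℕ) (x0 : Fin n → ℝ),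
      (∑ p : Fin t → (Fin n → Fin K),
          (∏ i, w (p i)) *
            f ((List.ofFn p).foldl
                (fun x π =>
                  x - (1 / ((K : ℝ) * γ)) • ((maskMat M π)⁻¹ *ᵥ (Aᵀ *ᵥ g (A *ᵥ x))))
                x0))
        - lstar ≤ (1 - ρ) ^ t * (f x0 - lstar) := by
  intro t x0
  have hK0 : (0:ℝ) < (K:ℝ) := by exact_mod_cast Nat.lt_of_lt_of_le Nat.zero_lt_one hK
  have hγ0 : γ ≠ 0 := ne_of_gt hγ
  have hKne : (K:ℝ) ≠ 0 := ne_of_gt hK0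
  set c : ℝ := 1 / ((K : ℝ) * γ) with hc
  have hcpos : 0 < c := by rw [hc]; positivity
  set step : (Fin n → ℝ) → (Fin n → Fin K) → (Fin n → ℝ) :=
    fun x π => x - c • ((maskMat M π)⁻¹ *ᵥ (Aᵀ *ᵥ g (A *ᵥ x))) with hstep
  set C : Matrix (Fin n) (Fin n) ℝ := ∑ π, w π • (maskMat M π)⁻¹ with hC
  set B : Matrix (Fin m) (Fin m) ℝ := A * C * Aᵀ with hB
  -- basic facts
  have hflstar : ∀ x, lstar ≤ f x := fun x => by rw [hf]; exact hlb _
  have htr : ∀ (v : Fin m → ℝ) (z : Fin n → ℝ), v ⬝ᵥ (A *ᵥ z) = (Aᵀ *ᵥ v) ⬝ᵥ z := by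
    intro v z
    rw [dotProduct_mulVec, ← mulVec_transpose]
  have hMt : Mᵀ = M := by rw [hM, transpose_mul, transpose_transpose]
  have hmaskT : ∀ π : Fin n → Fin K, (maskMat M π)ᵀ = maskMat M π := by
    intro π
    ext i j
    simp only [transpose_apply, maskMat, Matrix.of_apply]
    by_cases h : π i = π j
    · rw [if_pos h.symm, if_pos h]
      exact congrFun (congrFun hMt i) j
    · rw [if_neg (fun e => h e.symm), if_neg h]
  have hCt : Cᵀ = C := by
    rw [hC, Matrix.transpose_sum]
    apply Finset.sum_congr rfl
    intro π _
    rw [Matrix.transpose_smul, Matrix.transpose_nonsing_inv, hmaskT]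
  have hherm : B.IsHermitian := by
    have hBt : Bᵀ = B := by
      rw [hB, transpose_mul, transpose_mul, transpose_transpose, hCt, Matrix.mul_assoc]
    show Bᴴ = B
    have hct : Bᴴ = Bᵀ := by ext i j; simp [Matrix.conjTranspose_apply]
    rw [hct, hBt]
  -- quadratic form of B as a weighted sum
  have hBquad : ∀ v : Fin m → ℝ,
      v ⬝ᵥ (B *ᵥ v) = ∑ a, w a * ((Aᵀ *ᵥ v) ⬝ᵥ ((maskMat M a)⁻¹ *ᵥ (Aᵀ *ᵥ v))) := by
    intro v
    have hBv : B *ᵥ v = A *ᵥ (C *ᵥ (Aᵀ *ᵥ v)) := by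
      rw [hB, ← mulVec_mulVec, ← mulVec_mulVec]
    rw [hBv, htr, hC, sumMulVec, dotSumRight]
    apply Finset.sum_congr rfl
    intro a _
    rw [Matrix.smul_mulVec, dotProduct_smul, smul_eq_mul]
  have hpsd : ∀ v : Fin m → ℝ, 0 ≤ v ⬝ᵥ (B *ᵥ v) := by
    intro v
    rw [hBquad]
    apply Finset.sum_nonneg
    intro a _
    rcases (hw a).eq_or_lt with h0 | hpos
    · rw [← h0, zero_mul]
    · apply mul_nonneg (hw a)
      set b := Aᵀ *ᵥ v
      set y := (maskMat M a)⁻¹ *ᵥ b with hy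
      have hby : maskMat M a *ᵥ y = b := by
        rw [hy, mulVec_mulVec, Matrix.mul_nonsing_inv _ (hinv a hpos), one_mulVec]
      have hcomm : b ⬝ᵥ y = y ⬝ᵥ (maskMat M a *ᵥ y) := by
        rw [hby, dotProduct_comm]
      rw [hcomm, hM]
      exact quad_mask_nonneg A a y
  -- per-step decrease
  have hstepb : ∀ (x : Fin n → ℝ) (π : Fin n → Fin K), IsUnit (maskMat M π).det →
      f (step x π) ≤ f x
        - c / 2 * ((Aᵀ *ᵥ g (A *ᵥ x)) ⬝ᵥ ((maskMat M π)⁻¹ *ᵥ (Aᵀ *ᵥ g (A *ᵥ x)))) := by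
    intro x π hdet
    set gv := g (A *ᵥ x) with hgv
    set b := Aᵀ *ᵥ gv with hb
    set z := (maskMat M π)⁻¹ *ᵥ b with hz
    set q : ℝ := b ⬝ᵥ z with hq
    have hAstep : A *ᵥ step x π = A *ᵥ x + -(c • (A *ᵥ z)) := by
      rw [hstep]
      simp only []
      rw [Matrix.mulVec_sub, Matrix.mulVec_smul, sub_eq_add_neg]
    have h1 := hsmooth (A *ᵥ x) (-(c • (A *ᵥ z)))
    rw [← hAstep] at h1
    have hdot1 : gv ⬝ᵥ -(c • (A *ᵥ z)) = -(c * q) := by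
      rw [dotProduct_neg, dotProduct_smul, htr, ← hb, smul_eq_mul, hq]
    have hdot2 : (-(c • (A *ᵥ z))) ⬝ᵥ (-(c • (A *ᵥ z))) = c^2 * ((A *ᵥ z) ⬝ᵥ (A *ᵥ z)) := by
      rw [neg_dotProduct, dotProduct_neg, neg_neg, smul_dotProduct,
        dotProduct_smul, smul_eq_mul, smul_eq_mul]
      ring
    rw [hdot1, hdot2] at h1
    have hAz : (A *ᵥ z) ⬝ᵥ (A *ᵥ z) ≤ (K:ℝ) * q := by
      have hcs := key_cauchy A π z
      rw [← hM] at hcs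
      have hMz : maskMat M π *ᵥ z = b := by
        rw [hz, mulVec_mulVec, Matrix.mul_nonsing_inv _ hdet, one_mulVec]
      rw [hMz] at hcs
      rwa [dotProduct_comm z b, ← hq] at hcs
    calc f (step x π) = ℓ (A *ᵥ step x π) := hf _
      _ ≤ ℓ (A *ᵥ x) + -(c * q) + γ / 2 * (c^2 * ((A *ᵥ z) ⬝ᵥ (A *ᵥ z))) := h1
      _ ≤ ℓ (A *ᵥ x) + -(c * q) + γ / 2 * (c^2 * ((K:ℝ) * q)) := by
          apply add_le_add_right
          apply mul_le_mul_of_nonneg_left _ (le_of_lt (by positivity : (0:ℝ) < γ/2))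
          exact mul_le_mul_of_nonneg_left hAz (sq_nonneg c)
      _ = f x - c / 2 * q := by
          rw [hf x, hc]
          field_simp
          ring
  -- the key one-step expectation bound
  have hKEY : ∀ x : Fin n → ℝ,
      ∑ a, w a * f (step x a) ≤ f x - ρ * (f x - lstar) := by
    intro x
    set gv := g (A *ᵥ x) with hgv
    have hsum1 : ∑ a, w a * f (step x a)
        ≤ ∑ a, w a * (f x - c / 2 * ((Aᵀ *ᵥ gv) ⬝ᵥ ((maskMat M a)⁻¹ *ᵥ (Aᵀ *ᵥ gv)))) := by
      apply Finset.sum_le_sum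
      intro a _
      rcases (hw a).eq_or_lt with h0 | hpos
      · rw [← h0, zero_mul, zero_mul]
      · exact mul_le_mul_of_nonneg_left (hstepb x a (hinv a hpos)) (hw a)
    have hexp : ∀ a : Fin n → Fin K,
        w a * (f x - c / 2 * ((Aᵀ *ᵥ gv) ⬝ᵥ ((maskMat M a)⁻¹ *ᵥ (Aᵀ *ᵥ gv))))
          = w a * f x
            - c / 2 * (w a * ((Aᵀ *ᵥ gv) ⬝ᵥ ((maskMat M a)⁻¹ *ᵥ (Aᵀ *ᵥ gv)))) := by
      intro a; ring
    have hsum2 : ∑ a, w a * (f x - c / 2 * ((Aᵀ *ᵥ gv) ⬝ᵥ ((maskMat M a)⁻¹ *ᵥ (Aᵀ *ᵥ gv))))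
        = f x - c / 2 * (gv ⬝ᵥ (B *ᵥ gv)) := by
      rw [Finset.sum_congr rfl fun a _ => hexp a, Finset.sum_sub_distrib,
        ← Finset.sum_mul, hwsum, one_mul, ← Finset.mul_sum, ← hBquad gv]
    have hspec := lambdaMin_quad hherm gv
    have hlmin0 := lambdaMin_nonneg hpsd
    have hρ' : ρ = μ * c * lambdaMin B := by
      rw [hρ, hc]; ring
    have e1 := hPL (A *ᵥ x)
    have hfx : f x = ℓ (A *ᵥ x) := hf x
    have hkey2 : ρ * (f x - lstar) ≤ c / 2 * (gv ⬝ᵥ (B *ᵥ gv)) := by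
      calc ρ * (f x - lstar)
          = (c * lambdaMin B) * (μ * (ℓ (A *ᵥ x) - lstar)) := by rw [hρ', hfx]; ring
        _ ≤ (c * lambdaMin B) * (1 / 2 * (gv ⬝ᵥ gv)) :=
            mul_le_mul_of_nonneg_left e1 (mul_nonneg (le_of_lt hcpos) hlmin0)
        _ = c / 2 * (lambdaMin B * (gv ⬝ᵥ gv)) := by ring
        _ ≤ c / 2 * (gv ⬝ᵥ (B *ᵥ gv)) :=
            mul_le_mul_of_nonneg_left hspec (by linarith)
    calc ∑ a, w a * f (step x a)
        ≤ f x - c / 2 * (gv ⬝ᵥ (B *ᵥ gv)) := by rw [← hsum2]; exact hsum1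
      _ ≤ f x - ρ * (f x - lstar) := by linarith
  -- reduction to Sfun
  show Sfun w f step t x0 - lstar ≤ (1 - ρ) ^ t * (f x0 - lstar)
  -- zero case: value stays at lstar
  have claimA : ∀ tt : ℕ, ∀ x : Fin n → ℝ, f x = lstar → Sfun w f step tt x = lstar := by
    intro tt
    induction tt with
    | zero => intro x hx; rw [Sfun_zero]; exact hx
    | succ s ih =>
      intro x hx
      rw [Sfun_succ]
      have hks := hKEY x
      rw [hx, sub_self, mul_zero, sub_zero] at hks
      have hnn : ∀ a ∈ Finset.univ, (0:ℝ) ≤ w a * (f (step x a) - lstar) :=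
        fun a _ => mul_nonneg (hw a) (sub_nonneg.2 (hflstar _))
      have hsle : ∑ a, w a * (f (step x a) - lstar) ≤ 0 := by
        have heq : ∑ a, w a * (f (step x a) - lstar)
            = (∑ a, w a * f (step x a)) - lstar := by
          rw [Finset.sum_congr rfl fun a _ => mul_sub (w a) (f (step x a)) lstar,
            Finset.sum_sub_distrib, ← Finset.sum_mul, hwsum, one_mul]
        rw [heq]
        linarith
      have hzero : ∀ a ∈ Finset.univ, w a * (f (step x a) - lstar) = 0 :=
        (Finset.sum_eq_zero_iff_of_nonneg hnn).mp
          (le_antisymm hsle (Finset.sum_nonneg hnn))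
      have hterm : ∀ a : Fin n → Fin K,
          w a * Sfun w f step s (step x a) = w a * lstar := by
        intro a
        rcases (hw a).eq_or_lt with h0 | hpos
        · rw [← h0, zero_mul, zero_mul]
        · have h1 := hzero a (Finset.mem_univ a)
          have h2 := (mul_eq_zero.mp h1).resolve_left (ne_of_gt hpos)
          have hfs : f (step x a) = lstar := by linarith
          rw [ih _ hfs]
      rw [Finset.sum_congr rfl fun a _ => hterm a, ← Finset.sum_mul, hwsum, one_mul]
  by_cases hx0 : f x0 = lstar
  · rw [claimA t x0 hx0, hx0]
    simp
  · have hlt : lstar < f x0 := lt_of_le_of_ne (hflstar x0) (Ne.symm hx0)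
    have h1ρ : 0 ≤ 1 - ρ := by
      have h1 := hKEY x0
      have h2 : lstar ≤ ∑ a, w a * f (step x0 a) := by
        calc lstar = ∑ a, w a * lstar := by rw [← Finset.sum_mul, hwsum, one_mul]
          _ ≤ _ := Finset.sum_le_sum fun a _ =>
              mul_le_mul_of_nonneg_left (hflstar _) (hw a)
      have h3 : ρ * (f x0 - lstar) ≤ 1 * (f x0 - lstar) := by linarith
      have h4 : ρ ≤ 1 := le_of_mul_le_mul_right h3 (by linarith : 0 < f x0 - lstar)
      linarith
    -- main induction
    have claimB : ∀ tt : ℕ, ∀ x : Fin n → ℝ,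
        Sfun w f step tt x - lstar ≤ (1 - ρ) ^ tt * (f x - lstar) := by
      intro tt
      induction tt with
      | zero => intro x; rw [Sfun_zero]; simp
      | succ s ih =>
        intro x
        rw [Sfun_succ]
        have hstep1 : ∑ a, w a * Sfun w f step s (step x a)
            ≤ ∑ a, w a * (lstar + (1 - ρ) ^ s * (f (step x a) - lstar)) := by
          apply Finset.sum_le_sum
          intro a _
          apply mul_le_mul_of_nonneg_left _ (hw a)
          have := ih (step x a)
          linarith
        have hstep2 : ∑ a, w a * (lstar + (1 - ρ) ^ s * (f (step x a) - lstar))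
            = lstar + (1 - ρ) ^ s * ((∑ a, w a * f (step x a)) - lstar) := by
          have hterm : ∀ a : Fin n → Fin K,
              w a * (lstar + (1 - ρ) ^ s * (f (step x a) - lstar))
                = w a * (lstar - (1 - ρ) ^ s * lstar)
                  + (1 - ρ) ^ s * (w a * f (step x a)) := by
            intro a; ring
          rw [Finset.sum_congr rfl fun a _ => hterm a, Finset.sum_add_distrib,
            ← Finset.sum_mul, hwsum, one_mul, ← Finset.mul_sum]
          ring
        have hstep3 : lstar + (1 - ρ) ^ s * ((∑ a, w a * f (step x a)) - lstar)
            ≤ lstar + (1 - ρ) ^ s * ((f x - ρ * (f x - lstar)) - lstar) := by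
          apply add_le_add_right
          apply mul_le_mul_of_nonneg_left _ (pow_nonneg h1ρ s)
          have := hKEY x
          linarith
        have hfin : lstar + (1 - ρ) ^ s * ((f x - ρ * (f x - lstar)) - lstar)
            = (1 - ρ) ^ (s + 1) * (f x - lstar) + lstar := by
          rw [pow_succ]
          ring
        linarith
    exact claimB t x0
end

section
/- Let $f : \mathbb{R}^n \to \mathbb{R}$ be differentiable, $Q \in \mathbb{R}^{n\times n}$ symmetric positive definite, and suppose that for some $\xi \in (0,1]$ and a point $x$ it holds that $f(x + \Delta) \le \xi\big(f(x) + \nabla f(x)^\top \Delta + \tfrac12 \Delta^\top Q \Delta\big) + (1-\xi)f(x)$ for all $\Delta$. Let $\mathcal{P}$ be a partition of $[n]$ into $K$ blocks with $Q_\mathcal{P}$ invertible, and set $x_+ = x - \tfrac1K Q_\mathcal{P}^{-1}\nabla f(x)$. Then $f(x) - f(x_+) \geq \tfrac{\xi}{2K}\, \nabla f(x)^\top Q_\mathcal{P}^{-1} \nabla f(x)$. -/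
open Matrix

private lemma symm_dot {n : ℕ} {Q : Matrix (Fin n) (Fin n) ℝ} (hQ : Q.IsHermitian)
    (u w : Fin n → ℝ) : u ⬝ᵥ (Q *ᵥ w) = w ⬝ᵥ (Q *ᵥ u) := by
  have ht : Qᵀ = Q := by ext i j; simpa using hQ.apply i j
  rw [dotProduct_mulVec, ← mulVec_transpose, ht, dotProduct_comm]

/-- The key quadratic-form comparison `vᵀ Q v ≤ K · vᵀ Q_𝒫 v`. -/
private lemma mask_ineq {n K : ℕ} {Q : Matrix (Fin n) (Fin n) ℝ} (hQ : Q.PosSemidef)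
    (π : Fin n → Fin K) (v : Fin n → ℝ) :
    v ⬝ᵥ (Q *ᵥ v) ≤ (K : ℝ) * (v ⬝ᵥ (maskMat Q π *ᵥ v)) := by
  classical
  set p : Fin K → (Fin n → ℝ) := fun k i => if π i = k then v i else 0 with hp
  have hv : v = ∑ k, p k := by
    funext i
    simp only [hp, Finset.sum_apply]
    rw [Finset.sum_ite_eq]
    simp
  have hB : ∀ u w : Fin n → ℝ, u ⬝ᵥ (Q *ᵥ w) = w ⬝ᵥ (Q *ᵥ u) :=
    symm_dot hQ.1
  have hpos : ∀ u : Fin n → ℝ, 0 ≤ u ⬝ᵥ (Q *ᵥ u) := fun u =>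
    hQ.re_dotProduct_nonneg u
  -- expand the quadratic form over blocks
  have hsumL : ∀ u : Fin n → ℝ, (∑ k, p k) ⬝ᵥ u = ∑ k, p k ⬝ᵥ u := by
    intro u
    simp only [dotProduct, Finset.sum_apply, Finset.sum_mul]
    exact Finset.sum_comm
  have hsumR : ∀ u : Fin n → ℝ, ∀ q : Fin K → (Fin n → ℝ),
      u ⬝ᵥ (∑ l, q l) = ∑ l, u ⬝ᵥ q l := by
    intro u q
    simp only [dotProduct, Finset.sum_apply, Finset.mul_sum]
    exact Finset.sum_comm
  have hexp : v ⬝ᵥ (Q *ᵥ v) = ∑ k, ∑ l, p k ⬝ᵥ (Q *ᵥ p l) := by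
    conv_lhs => rw [hv]
    rw [show Q *ᵥ ∑ l, p l = ∑ l, Q *ᵥ p l from map_sum Q.mulVecLin p Finset.univ,
      hsumL]
    exact Finset.sum_congr rfl fun k _ => hsumR _ _
  -- cross terms bounded by diagonal terms
  have hcross : ∀ k l, p k ⬝ᵥ (Q *ᵥ p l) ≤
      (1 / 2) * (p k ⬝ᵥ (Q *ᵥ p k) + p l ⬝ᵥ (Q *ᵥ p l)) := by
    intro k l
    have h0 := hpos (p k - p l)
    have hsub : (p k - p l) ⬝ᵥ (Q *ᵥ (p k - p l)) =
        p k ⬝ᵥ (Q *ᵥ p k) - p k ⬝ᵥ (Q *ᵥ p l) - p l ⬝ᵥ (Q *ᵥ p k)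
          + p l ⬝ᵥ (Q *ᵥ p l) := by
      rw [mulVec_sub, sub_dotProduct, dotProduct_sub, dotProduct_sub]
      ring
    have hs := hB (p k) (p l)
    nlinarith [h0, hsub]
  -- the block-diagonal quadratic form equals the sum of diagonal terms
  have hdiag : v ⬝ᵥ (maskMat Q π *ᵥ v) = ∑ k, p k ⬝ᵥ (Q *ᵥ p k) := by
    simp only [hp, dotProduct, mulVec, maskMat, Matrix.of_apply]
    rw [Finset.sum_comm]
    refine Finset.sum_congr rfl fun i _ => ?_
    simp only [Finset.mul_sum]
    rw [Finset.sum_comm]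
    refine Finset.sum_congr rfl fun j _ => ?_
    simp only [ite_mul, mul_ite, mul_zero, zero_mul]
    rw [Finset.sum_ite_eq]
    simp only [Finset.mem_univ, if_true]
  calc v ⬝ᵥ (Q *ᵥ v) = ∑ k, ∑ l, p k ⬝ᵥ (Q *ᵥ p l) := hexp
    _ ≤ ∑ k, ∑ l, (1 / 2) * (p k ⬝ᵥ (Q *ᵥ p k) + p l ⬝ᵥ (Q *ᵥ p l)) :=
        Finset.sum_le_sum fun k _ => Finset.sum_le_sum fun l _ => hcross k l
    _ = (K : ℝ) * ∑ k, p k ⬝ᵥ (Q *ᵥ p k) := by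
        simp only [mul_add, Finset.sum_add_distrib, Finset.sum_const, Finset.card_univ,
          Fintype.card_fin, nsmul_eq_mul, ← Finset.mul_sum, ← Finset.sum_mul]
        ring
    _ = (K : ℝ) * (v ⬝ᵥ (maskMat Q π *ᵥ v)) := by rw [hdiag]

theorem stmt6 {n K : ℕ} (hK : 1 ≤ K)
    (f : (Fin n → ℝ) → ℝ) (g : (Fin n → ℝ) → (Fin n → ℝ))
    (hdiff : Differentiable ℝ f)
    (hgrad : ∀ x u, fderiv ℝ f x u = g x ⬝ᵥ u)
    (Q : Matrix (Fin n) (Fin n) ℝ) (hQ : Q.PosDef)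
    (ξ : ℝ) (hξ0 : 0 < ξ) (hξ1 : ξ ≤ 1)
    (x : Fin n → ℝ)
    (hmodel : ∀ Δ : Fin n → ℝ,
      f (x + Δ) ≤ ξ * (f x + g x ⬝ᵥ Δ + 1 / 2 * (Δ ⬝ᵥ (Q *ᵥ Δ))) + (1 - ξ) * f x)
    (π : Fin n → Fin K) (hQP : IsUnit (maskMat Q π).det)
    (xplus : Fin n → ℝ)
    (hxplus : xplus = x - ((K : ℝ)⁻¹) • ((maskMat Q π)⁻¹ *ᵥ g x)) :
    f x - f xplus ≥ ξ / (2 * (K : ℝ)) * (g x ⬝ᵥ ((maskMat Q π)⁻¹ *ᵥ g x)) := by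
  have hKpos : (0 : ℝ) < K := by exact_mod_cast hK
  set w : Fin n → ℝ := (maskMat Q π)⁻¹ *ᵥ g x with hw
  set Δ : Fin n → ℝ := -((K : ℝ)⁻¹ • w) with hΔ
  have hxp : xplus = x + Δ := by rw [hxplus, hΔ, sub_eq_add_neg]
  have hQPw : maskMat Q π *ᵥ w = g x := by
    rw [hw, mulVec_mulVec, Matrix.mul_nonsing_inv _ hQP, one_mulVec]
  set s : ℝ := g x ⬝ᵥ w with hs
  have hgΔ : g x ⬝ᵥ Δ = -(K : ℝ)⁻¹ * s := by
    rw [hΔ, dotProduct_neg, dotProduct_smul, hs]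
    simp [smul_eq_mul]
  have hQPΔ : Δ ⬝ᵥ (maskMat Q π *ᵥ Δ) = (K : ℝ)⁻¹ * (K : ℝ)⁻¹ * s := by
    rw [hΔ, mulVec_neg, dotProduct_neg, neg_dotProduct, neg_neg,
      mulVec_smul, dotProduct_smul, smul_dotProduct, hQPw]
    rw [hs, dotProduct_comm]
    simp [smul_eq_mul]; ring
  have hQΔ : Δ ⬝ᵥ (Q *ᵥ Δ) ≤ (K : ℝ)⁻¹ * s := by
    have h1 := mask_ineq hQ.posSemidef π Δ
    rw [hQPΔ] at h1
    calc Δ ⬝ᵥ (Q *ᵥ Δ) ≤ (K : ℝ) * ((K : ℝ)⁻¹ * (K : ℝ)⁻¹ * s) := h1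
      _ = (K : ℝ)⁻¹ * s := by field_simp
  have hm := hmodel Δ
  rw [← hxp, hgΔ] at hm
  have hdiv : ξ / (2 * (K : ℝ)) * s = ξ * ((K : ℝ)⁻¹ * s) / 2 := by
    rw [eq_div_iff (by norm_num : (2:ℝ) ≠ 0)]
    field_simp
  have h2 : ξ * (Δ ⬝ᵥ (Q *ᵥ Δ)) ≤ ξ * ((K : ℝ)⁻¹ * s) :=
    mul_le_mul_of_nonneg_left hQΔ hξ0.le
  rw [ge_iff_le, hdiv]
  nlinarith [hm, h2]
end

section
/- Under the setup of the previous statement, let $\Delta\tilde x^\star := -Q^{-1}\nabla f(x)$ denote the minimizer of the quadratic model $\tilde f_x(\cdot;Q)$. Then $f(x) - f(x_+) \geq \tfrac{\xi}{2K}\,(\Delta\tilde x^\star)^\top Q^\top Q_\mathcal{P}^{-1} Q\, (\Delta\tilde x^\star) \geq \tfrac{\xi}{2K}\,\lambda_{\min}\big(Q^\top Q_\mathcal{P}^{-1} Q\big)\,\|\Delta\tilde x^\star\|^2$. -/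
open Matrix

lemma mask_quad_bound {n K : ℕ} (Q : Matrix (Fin n) (Fin n) ℝ) (hQ : Q.PosSemidef)
    (π : Fin n → Fin K) (u : Fin n → ℝ) :
    u ⬝ᵥ Q *ᵥ u ≤ (K : ℝ) * (u ⬝ᵥ maskMat Q π *ᵥ u) := by
  classical
  set v : Fin K → Fin n → ℝ := fun k i => if π i = k then u i else 0 with hv
  have hQs : ∀ i j, Q j i = Q i j := by
    intro i j
    have h := congrFun (congrFun hQ.1 j) i
    simpa [Matrix.conjTranspose_apply] using h.symm
  have hu : ∑ k, v k = u := by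
    funext i
    rw [Finset.sum_apply]
    simp [hv, Finset.sum_ite_eq]
  have hexpand : ∀ k l, v k ⬝ᵥ Q *ᵥ v l = ∑ i, ∑ j, v k i * (Q i j * v l j) := by
    intro k l
    simp [dotProduct, mulVec, Finset.mul_sum]
  have hd1 : ∀ w : Fin n → ℝ, (∑ k, v k) ⬝ᵥ w = ∑ k, v k ⬝ᵥ w := by
    intro w
    simp only [dotProduct, Finset.sum_apply, Finset.sum_mul]
    exact Finset.sum_comm
  have hd2 : Q *ᵥ (∑ k, v k) = ∑ k, Q *ᵥ v k := by
    funext i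
    simp only [mulVec, dotProduct, Finset.sum_apply, Finset.mul_sum]
    exact Finset.sum_comm
  have hd3 : ∀ (w : Fin n → ℝ), w ⬝ᵥ (∑ l, Q *ᵥ v l) = ∑ l, w ⬝ᵥ Q *ᵥ v l := by
    intro w
    simp only [dotProduct, Finset.sum_apply, Finset.mul_sum]
    exact Finset.sum_comm
  have htot : u ⬝ᵥ Q *ᵥ u = ∑ k, ∑ l, v k ⬝ᵥ Q *ᵥ v l := by
    conv_lhs => rw [← hu, hd2, hd1]
    exact Finset.sum_congr rfl fun k _ => hd3 (v k)
  have hBsymm : ∀ k l, v l ⬝ᵥ Q *ᵥ v k = v k ⬝ᵥ Q *ᵥ v l := by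
    intro k l
    rw [hexpand, hexpand, Finset.sum_comm]
    refine Finset.sum_congr rfl fun i _ => Finset.sum_congr rfl fun j _ => ?_
    rw [hQs i j]; ring
  have hCS : ∀ k l, v k ⬝ᵥ Q *ᵥ v l ≤ (v k ⬝ᵥ Q *ᵥ v k + v l ⬝ᵥ Q *ᵥ v l) / 2 := by
    intro k l
    have h0 : 0 ≤ (v k - v l) ⬝ᵥ Q *ᵥ (v k - v l) := by
      simpa using hQ.dotProduct_mulVec_nonneg (v k - v l)
    rw [sub_dotProduct, mulVec_sub, dotProduct_sub, dotProduct_sub] at h0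
    have h1 := hBsymm k l
    linarith
  have hdiag : ∑ k, v k ⬝ᵥ Q *ᵥ v k = u ⬝ᵥ maskMat Q π *ᵥ u := by
    have hrhs : u ⬝ᵥ maskMat Q π *ᵥ u
        = ∑ i, ∑ j, u i * ((if π i = π j then Q i j else 0) * u j) := by
      simp [dotProduct, mulVec, maskMat, Finset.mul_sum]
    rw [hrhs]
    conv_lhs => rw [Finset.sum_congr rfl fun k _ => hexpand k k]
    rw [Finset.sum_comm]
    refine Finset.sum_congr rfl fun i _ => ?_
    rw [Finset.sum_comm]
    refine Finset.sum_congr rfl fun j _ => ?_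
    rw [Finset.sum_eq_single (π i)]
    · have e1 : v (π i) i = u i := by simp [hv]
      have e2 : v (π i) j = if π i = π j then u j else 0 := by simp [hv, eq_comm]
      rw [e1, e2]
      split_ifs with h
      · ring
      · ring
    · intro k _ hk
      have e1 : v k i = 0 := by simp [hv, Ne.symm hk]
      rw [e1, zero_mul]
    · intro h
      exact absurd (Finset.mem_univ _) h
  have hmid : ∑ k, ∑ l, ((v k ⬝ᵥ Q *ᵥ v k) + (v l ⬝ᵥ Q *ᵥ v l)) / 2
      = (K : ℝ) * ∑ k, v k ⬝ᵥ Q *ᵥ v k := by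
    have h1 : ∀ k, ∑ l, ((v k ⬝ᵥ Q *ᵥ v k) + (v l ⬝ᵥ Q *ᵥ v l)) / 2
        = (K : ℝ) * (v k ⬝ᵥ Q *ᵥ v k) / 2 + (∑ l, v l ⬝ᵥ Q *ᵥ v l) / 2 := by
      intro k
      rw [← Finset.sum_div, Finset.sum_add_distrib, Finset.sum_const, Finset.card_univ,
        Fintype.card_fin, nsmul_eq_mul, add_div]
    calc ∑ k, ∑ l, ((v k ⬝ᵥ Q *ᵥ v k) + (v l ⬝ᵥ Q *ᵥ v l)) / 2
        = ∑ k, ((K : ℝ) * (v k ⬝ᵥ Q *ᵥ v k) / 2 + (∑ l, v l ⬝ᵥ Q *ᵥ v l) / 2) :=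
          Finset.sum_congr rfl fun k _ => h1 k
      _ = ∑ k, (K : ℝ) * (v k ⬝ᵥ Q *ᵥ v k) / 2 + ∑ _k : Fin K, (∑ l, v l ⬝ᵥ Q *ᵥ v l) / 2 :=
          Finset.sum_add_distrib
      _ = (K : ℝ) * (∑ k, v k ⬝ᵥ Q *ᵥ v k) / 2
          + (K : ℝ) * ((∑ l, v l ⬝ᵥ Q *ᵥ v l) / 2) := by
          rw [← Finset.sum_div, ← Finset.mul_sum, Finset.sum_const, Finset.card_univ,
            Fintype.card_fin, nsmul_eq_mul]
      _ = (K : ℝ) * ∑ k, v k ⬝ᵥ Q *ᵥ v k := by ring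
  calc u ⬝ᵥ Q *ᵥ u = ∑ k, ∑ l, v k ⬝ᵥ Q *ᵥ v l := htot
    _ ≤ ∑ k, ∑ l, ((v k ⬝ᵥ Q *ᵥ v k) + (v l ⬝ᵥ Q *ᵥ v l)) / 2 :=
        Finset.sum_le_sum fun k _ => Finset.sum_le_sum fun l _ => hCS k l
    _ = (K : ℝ) * ∑ k, v k ⬝ᵥ Q *ᵥ v k := hmid
    _ = (K : ℝ) * (u ⬝ᵥ maskMat Q π *ᵥ u) := by rw [hdiag]

lemma quad_ge_lambdaMin {n : ℕ} (S : Matrix (Fin n) (Fin n) ℝ) (hS : S.IsHermitian)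
    (v : Fin n → ℝ) : lambdaMin S * (v ⬝ᵥ v) ≤ v ⬝ᵥ S *ᵥ v := by
  classical
  rcases Nat.eq_zero_or_pos n with h | h
  · subst h
    simp [dotProduct]
  · haveI : Nonempty (Fin n) := Fin.pos_iff_nonempty.mp h
    haveI : Nontrivial (Fin n → ℝ) := Function.nontrivial
    have hset : {μ : ℝ | Module.End.HasEigenvalue (Matrix.toLin' S) μ}
        = Set.range hS.eigenvalues := by
      ext μ
      rw [Set.mem_setOf_eq, Module.End.hasEigenvalue_iff_mem_spectrum]
      rw [show Matrix.toLin' S = Matrix.toLinAlgEquiv' S from rfl]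
      rw [AlgEquiv.spectrum_eq Matrix.toLinAlgEquiv' S]
      rw [hS.spectrum_real_eq_range_eigenvalues]
    have hbdd : BddBelow (Set.range hS.eigenvalues) := (Set.finite_range _).bddBelow
    have hle : ∀ i, lambdaMin S ≤ hS.eigenvalues i := fun i => by
      rw [lambdaMin, hset]; exact csInf_le hbdd ⟨i, rfl⟩
    set c := lambdaMin S with hc
    have hU : (hS.eigenvectorUnitary : Matrix (Fin n) (Fin n) ℝ)
        * star (hS.eigenvectorUnitary : Matrix (Fin n) (Fin n) ℝ) = 1 :=
      (Matrix.mem_unitaryGroup_iff).mp hS.eigenvectorUnitary.2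
    have h1 : S - c • 1 = (hS.eigenvectorUnitary : Matrix (Fin n) (Fin n) ℝ)
        * diagonal (fun i => hS.eigenvalues i - c)
        * (hS.eigenvectorUnitary : Matrix (Fin n) (Fin n) ℝ)ᴴ := by
      conv_lhs => rw [hS.spectral_theorem]
      rw [← star_eq_conjTranspose]
      calc (hS.eigenvectorUnitary : Matrix (Fin n) (Fin n) ℝ)
            * diagonal (RCLike.ofReal ∘ hS.eigenvalues)
            * star (hS.eigenvectorUnitary : Matrix (Fin n) (Fin n) ℝ) - c • 1
          = (hS.eigenvectorUnitary : Matrix (Fin n) (Fin n) ℝ)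
            * (diagonal (RCLike.ofReal ∘ hS.eigenvalues) - c • 1)
            * star (hS.eigenvectorUnitary : Matrix (Fin n) (Fin n) ℝ) := by
            rw [Matrix.mul_sub, Matrix.sub_mul]
            congr 1
            rw [Matrix.mul_smul, Matrix.mul_one, Matrix.smul_mul, hU]
        _ = _ := by
            congr 1
            congr 1
            rw [smul_one_eq_diagonal, diagonal_sub]
            congr 1
    have hps : (S - c • 1).PosSemidef := by
      rw [h1]
      exact (posSemidef_diagonal_iff.mpr fun i => sub_nonneg.mpr (hle i)).mul_mul_conjTranspose_same _
    have h2 := hps.dotProduct_mulVec_nonneg v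
    rw [sub_mulVec, dotProduct_sub, smul_mulVec, one_mulVec, dotProduct_smul] at h2
    simp only [star_trivial, smul_eq_mul] at h2
    linarith

theorem stmt7 {n K : ℕ} (hK : 1 ≤ K)
    (f : (Fin n → ℝ) → ℝ) (g : (Fin n → ℝ) → (Fin n → ℝ))
    (hdiff : Differentiable ℝ f)
    (hgrad : ∀ x u, fderiv ℝ f x u = g x ⬝ᵥ u)
    (Q : Matrix (Fin n) (Fin n) ℝ) (hQ : Q.PosDef)
    (ξ : ℝ) (hξ0 : 0 < ξ) (hξ1 : ξ ≤ 1)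
    (x : Fin n → ℝ)
    (hmodel : ∀ Δ : Fin n → ℝ,
      f (x + Δ) ≤ ξ * (f x + g x ⬝ᵥ Δ + 1 / 2 * (Δ ⬝ᵥ (Q *ᵥ Δ))) + (1 - ξ) * f x)
    (π : Fin n → Fin K) (hQP : IsUnit (maskMat Q π).det)
    (xplus : Fin n → ℝ)
    (hxplus : xplus = x - ((K : ℝ)⁻¹) • ((maskMat Q π)⁻¹ *ᵥ g x))
    -- the minimizer of the quadratic model
    (Δstar : Fin n → ℝ) (hΔstar : Δstar = -(Q⁻¹ *ᵥ g x)) :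
    f x - f xplus ≥
        ξ / (2 * (K : ℝ)) * (Δstar ⬝ᵥ ((Qᵀ * (maskMat Q π)⁻¹ * Q) *ᵥ Δstar)) ∧
    ξ / (2 * (K : ℝ)) * (Δstar ⬝ᵥ ((Qᵀ * (maskMat Q π)⁻¹ * Q) *ᵥ Δstar)) ≥
        ξ / (2 * (K : ℝ)) * lambdaMin (Qᵀ * (maskMat Q π)⁻¹ * Q) * (Δstar ⬝ᵥ Δstar) := by
  classical
  have hK1 : (1 : ℝ) ≤ (K : ℝ) := by exact_mod_cast hK
  have hK0 : (0 : ℝ) < (K : ℝ) := lt_of_lt_of_le zero_lt_one hK1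
  have hQdet : IsUnit Q.det := (Matrix.isUnit_iff_isUnit_det Q).mp hQ.isUnit
  have hQQ : Q * Q⁻¹ = 1 := mul_nonsing_inv Q hQdet
  set P := (maskMat Q π)⁻¹ with hP
  have hMP : maskMat Q π * P = 1 := mul_nonsing_inv _ hQP
  have hQsym : Qᵀ = Q := by
    ext i j
    have h := congrFun (congrFun hQ.1 i) j
    simpa [Matrix.conjTranspose_apply] using h
  have hMsym : (maskMat Q π)ᵀ = maskMat Q π := by
    ext i j
    simp only [transpose_apply, maskMat, of_apply]
    have hq : Q j i = Q i j := by
      have h2 := congrFun (congrFun hQ.1 i) j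
      simpa [Matrix.conjTranspose_apply] using h2
    by_cases h : π i = π j
    · rw [if_pos h, if_pos h.symm, hq]
    · rw [if_neg h, if_neg fun hh => h hh.symm]
  have hPsym : Pᵀ = P := by
    rw [hP, transpose_nonsing_inv, hMsym]
  set gx := g x with hgx
  set Δ := (-(K : ℝ)⁻¹) • (P *ᵥ gx) with hΔ
  have hxpΔ : xplus = x + Δ := by
    rw [hxplus, sub_eq_add_neg, hΔ, neg_smul]
  set a := gx ⬝ᵥ (P *ᵥ gx) with ha
  set b := (P *ᵥ gx) ⬝ᵥ (Q *ᵥ (P *ᵥ gx)) with hb'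
  have hb : b ≤ (K : ℝ) * a := by
    have hMv : maskMat Q π *ᵥ (P *ᵥ gx) = gx := by
      rw [mulVec_mulVec, hMP, one_mulVec]
    have h := mask_quad_bound Q hQ.posSemidef π (P *ᵥ gx)
    rw [hMv, dotProduct_comm (P *ᵥ gx) gx] at h
    exact h
  -- the quadratic form at Δstar equals a
  have hQΔ : Q *ᵥ Δstar = -gx := by
    rw [hΔstar, mulVec_neg, mulVec_mulVec, hQQ, one_mulVec]
  have hquad : Δstar ⬝ᵥ ((Qᵀ * P * Q) *ᵥ Δstar) = a := by
    rw [← mulVec_mulVec, ← mulVec_mulVec, dotProduct_mulVec, vecMul_transpose, hQΔ,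
      mulVec_neg, dotProduct_neg, neg_dotProduct, neg_neg, ha]
  -- inner products with Δ
  have h1 : gx ⬝ᵥ Δ = -((K : ℝ)⁻¹ * a) := by
    rw [hΔ, dotProduct_smul, ha, smul_eq_mul]; ring
  have h2 : Δ ⬝ᵥ (Q *ᵥ Δ) = (K : ℝ)⁻¹ * (K : ℝ)⁻¹ * b := by
    rw [hΔ, Matrix.mulVec_smul, smul_dotProduct, dotProduct_smul, hb', smul_eq_mul,
      smul_eq_mul]
    ring
  have hfp : f xplus ≤ ξ * (f x + gx ⬝ᵥ Δ + 1 / 2 * (Δ ⬝ᵥ (Q *ᵥ Δ))) + (1 - ξ) * f x := by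
    rw [hxpΔ]; exact hmodel Δ
  rw [h1, h2] at hfp
  have e1 : (K : ℝ)⁻¹ * (K : ℝ)⁻¹ * b ≤ (K : ℝ)⁻¹ * a := by
    have h := mul_le_mul_of_nonneg_left hb
      (le_of_lt (mul_pos (inv_pos.mpr hK0) (inv_pos.mpr hK0)))
    calc (K : ℝ)⁻¹ * (K : ℝ)⁻¹ * b ≤ (K : ℝ)⁻¹ * (K : ℝ)⁻¹ * ((K : ℝ) * a) := h
      _ = (K : ℝ)⁻¹ * a := by field_simp
  have e2 : ξ * ((K : ℝ)⁻¹ * (K : ℝ)⁻¹ * b) ≤ ξ * ((K : ℝ)⁻¹ * a) :=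
    mul_le_mul_of_nonneg_left e1 hξ0.le
  have hdiv : ξ / (2 * (K : ℝ)) * a = ξ * ((K : ℝ)⁻¹ * a) / 2 := by
    ring
  constructor
  · rw [hquad, hdiv]
    linarith
  · have hSsym : (Qᵀ * P * Q).IsHermitian := by
      have : (Qᵀ * P * Q)ᵀ = Qᵀ * P * Q := by
        rw [transpose_mul, transpose_mul, hPsym, transpose_transpose, hQsym, Matrix.mul_assoc]
      rw [Matrix.IsHermitian, conjTranspose_eq_transpose_of_trivial, this]
    have h := quad_ge_lambdaMin (Qᵀ * P * Q) hSsym Δstar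
    have hnn : 0 ≤ ξ / (2 * (K : ℝ)) := by positivity
    calc ξ / (2 * (K : ℝ)) * lambdaMin (Qᵀ * P * Q) * (Δstar ⬝ᵥ Δstar)
        = ξ / (2 * (K : ℝ)) * (lambdaMin (Qᵀ * P * Q) * (Δstar ⬝ᵥ Δstar)) := by ring
      _ ≤ ξ / (2 * (K : ℝ)) * (Δstar ⬝ᵥ ((Qᵀ * P * Q) *ᵥ Δstar)) :=
          mul_le_mul_of_nonneg_left h hnn
end
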